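/- The stretching transformation on flow graphs is confluent and idempotent: the cumulative result of applying the four local vertex-splitting transformations to all interior vertices is independent of the order of application, and no interior vertex of the resulting graph satisfies the hypotheses of any of the four transformations. -/
import Mathlib


/-- A finite digraph on a finite set of natural-number vertices (loops allowed). -/
structure NGraph where
  verts : Finset ℕ
  edges : Finset (ℕ × ℕ)

/-- Number of incoming non-loop edges at `v`. -/
def din (G : NGraph) (v : ℕ) : ℕ := (G.edges.filter (fun e => e.2 = v ∧ e.1 ≠ v)).card

/-- Number of outgoing non-loop edges at `v`. -/
def dout (G : NGraph) (v : ℕ) : ℕ := (G.edges.filter (fun e => e.1 = v ∧ e.2 ≠ v)).card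

/-- `v` carries a loop. -/
def hasLoop (G : NGraph) (v : ℕ) : Prop := (v, v) ∈ G.edges

/-- One of the four local splitting transformations applies at `v`. -/
def Applicable (G : NGraph) (v : ℕ) : Prop :=
  (din G v = 1 ∧ 1 < dout G v ∧ hasLoop G v) ∨
  (1 < din G v ∧ dout G v = 1 ∧ hasLoop G v) ∨
  (1 < din G v ∧ 1 < dout G v ∧ ¬hasLoop G v) ∨
  (1 < din G v ∧ 1 < dout G v ∧ hasLoop G v)

/-- Case 1 split at `v` (d⁺ = 1, d⁻ > 1, loop): `v` becomes `vs` (receiving the incoming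
edge and the loop) and `vt` (emitting the outgoing edges), with a new edge `vs → vt`. -/
def Split1 (G : NGraph) (v : ℕ) (G' : NGraph) : Prop :=
  din G v = 1 ∧ 1 < dout G v ∧ hasLoop G v ∧
  ∃ vs vt : ℕ, vs ∉ G.verts ∧ vt ∉ G.verts ∧ vs ≠ vt ∧
    G'.verts = insert vs (insert vt (G.verts.erase v)) ∧
    G'.edges = insert (vs, vt) (G.edges.image (fun e =>
      if e.1 = v ∧ e.2 = v then (vs, vs)
      else (if e.1 = v then vt else e.1, if e.2 = v then vs else e.2)))

/-- Case 2 split at `v` (d⁺ > 1, d⁻ = 1, loop): `vs` receives the incoming edges, `vt`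
emits the outgoing edge and holds the loop, with a new edge `vs → vt`. -/
def Split2 (G : NGraph) (v : ℕ) (G' : NGraph) : Prop :=
  1 < din G v ∧ dout G v = 1 ∧ hasLoop G v ∧
  ∃ vs vt : ℕ, vs ∉ G.verts ∧ vt ∉ G.verts ∧ vs ≠ vt ∧
    G'.verts = insert vs (insert vt (G.verts.erase v)) ∧
    G'.edges = insert (vs, vt) (G.edges.image (fun e =>
      if e.1 = v ∧ e.2 = v then (vt, vt)
      else (if e.1 = v then vt else e.1, if e.2 = v then vs else e.2)))

/-- Case 3 split at `v` (d⁺ > 1, d⁻ > 1, no loop): `vs` receives the incoming edges,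
`vt` emits the outgoing edges, with a new edge `vs → vt`. -/
def Split3 (G : NGraph) (v : ℕ) (G' : NGraph) : Prop :=
  1 < din G v ∧ 1 < dout G v ∧ ¬hasLoop G v ∧
  ∃ vs vt : ℕ, vs ∉ G.verts ∧ vt ∉ G.verts ∧ vs ≠ vt ∧
    G'.verts = insert vs (insert vt (G.verts.erase v)) ∧
    G'.edges = insert (vs, vt) (G.edges.image (fun e =>
      (if e.1 = v then vt else e.1, if e.2 = v then vs else e.2)))

/-- Case 4 split at `v` (d⁺ > 1, d⁻ > 1, loop): `vs` receives the incoming edges, `v'`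
holds the loop, `vt` emits the outgoing edges, with new edges `vs → v'` and `v' → vt`. -/
def Split4 (G : NGraph) (v : ℕ) (G' : NGraph) : Prop :=
  1 < din G v ∧ 1 < dout G v ∧ hasLoop G v ∧
  ∃ vs v' vt : ℕ, vs ∉ G.verts ∧ v' ∉ G.verts ∧ vt ∉ G.verts ∧
    vs ≠ v' ∧ vs ≠ vt ∧ v' ≠ vt ∧
    G'.verts = insert vs (insert v' (insert vt (G.verts.erase v))) ∧
    G'.edges = insert (vs, v') (insert (v', vt) (G.edges.image (fun e =>
      if e.1 = v ∧ e.2 = v then (v', v')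
      else (if e.1 = v then vt else e.1, if e.2 = v then vs else e.2))))

/-- One stretching step: apply one of the four transformations at some interior vertex
(i.e. a vertex other than the source `s` and the target `t`). -/
def Step (s t : ℕ) (G G' : NGraph) : Prop :=
  ∃ v ∈ G.verts, v ≠ s ∧ v ≠ t ∧
    (Split1 G v G' ∨ Split2 G v G' ∨ Split3 G v G' ∨ Split4 G v G')

/-- No transformation applies at any interior vertex. -/
def NormalForm (s t : ℕ) (G : NGraph) : Prop :=
  ∀ v ∈ G.verts, v ≠ s → v ≠ t → ¬Applicable G v

/-- Digraph isomorphism. -/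
def NIso (G G' : NGraph) : Prop :=
  ∃ φ : ℕ → ℕ, Set.BijOn φ (G.verts : Set ℕ) (G'.verts : Set ℕ) ∧
    ∀ a ∈ G.verts, ∀ b ∈ G.verts, ((a, b) ∈ G.edges ↔ (φ a, φ b) ∈ G'.edges)

/-- `p` is a path from `s` to `t` in `G`. -/
def NSTPath (G : NGraph) (s t : ℕ) (p : List ℕ) : Prop :=
  p.head? = some s ∧ p.getLast? = some t ∧ p.Chain' (fun a b => (a, b) ∈ G.edges)

/-- `G` is a flow graph with source `s` and target `t`. -/
def NIsFlowGraph (G : NGraph) (s t : ℕ) : Prop :=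
  (∀ e ∈ G.edges, e.1 ∈ G.verts ∧ e.2 ∈ G.verts) ∧
  s ∈ G.verts ∧ t ∈ G.verts ∧
  (∀ v ∈ G.verts, (∀ u, u ≠ v → (u, v) ∉ G.edges) ↔ v = s) ∧
  (∀ v ∈ G.verts, (∀ u, u ≠ v → (v, u) ∉ G.edges) ↔ v = t) ∧
  (∃! x, (s, x) ∈ G.edges) ∧ (∃! x, (x, t) ∈ G.edges) ∧
  (∀ v ∈ G.verts, ∃ p : List ℕ, NSTPath G s t p ∧ v ∈ p)

namespace Stretching

open Finset

/-- Well-formedness: all edge endpoints are vertices. -/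
def WFg (G : NGraph) : Prop := ∀ e ∈ G.edges, e.1 ∈ G.verts ∧ e.2 ∈ G.verts

/-- The type of the splitting transformation applicable at `v` (0 if none). -/
def atype (G : NGraph) (v : ℕ) : ℕ :=
  if din G v = 1 ∧ 1 < dout G v ∧ (v, v) ∈ G.edges then 1
  else if 1 < din G v ∧ dout G v = 1 ∧ (v, v) ∈ G.edges then 2
  else if 1 < din G v ∧ 1 < dout G v ∧ (v, v) ∉ G.edges then 3
  else if 1 < din G v ∧ 1 < dout G v ∧ (v, v) ∈ G.edges then 4
  else 0

lemma applicable_iff_atype {G : NGraph} {v : ℕ} : Applicable G v ↔ atype G v ≠ 0 := by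
  unfold Applicable atype hasLoop
  split_ifs <;> simp_all

lemma atype_lt5 {G : NGraph} {v : ℕ} : atype G v < 5 := by
  unfold atype; split_ifs <;> omega

lemma atype_congr {G H : NGraph} {v u : ℕ} (h1 : din G v = din H u)
    (h2 : dout G v = dout H u) (h3 : (v, v) ∈ G.edges ↔ (u, u) ∈ H.edges) :
    atype G v = atype H u := by
  unfold atype; rw [h1, h2]; simp only [h3]

lemma atype1 {G : NGraph} {v : ℕ} (h : atype G v = 1) :
    din G v = 1 ∧ 1 < dout G v ∧ (v, v) ∈ G.edges := by
  unfold atype at h; split_ifs at h <;> first | assumption | omega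

lemma atype2 {G : NGraph} {v : ℕ} (h : atype G v = 2) :
    1 < din G v ∧ dout G v = 1 ∧ (v, v) ∈ G.edges := by
  unfold atype at h; split_ifs at h <;> first | assumption | omega

lemma atype3 {G : NGraph} {v : ℕ} (h : atype G v = 3) :
    1 < din G v ∧ 1 < dout G v ∧ (v, v) ∉ G.edges := by
  unfold atype at h; split_ifs at h <;> first | assumption | omega

lemma atype4 {G : NGraph} {v : ℕ} (h : atype G v = 4) :
    1 < din G v ∧ 1 < dout G v ∧ (v, v) ∈ G.edges := by
  unfold atype at h; split_ifs at h <;> first | assumption | omega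

lemma atype_eq1 {G : NGraph} {v : ℕ} (h : din G v = 1 ∧ 1 < dout G v ∧ (v, v) ∈ G.edges) :
    atype G v = 1 := by
  unfold atype; split_ifs <;> first | rfl | (exfalso; omega) | tauto

lemma atype_eq2 {G : NGraph} {v : ℕ} (h : 1 < din G v ∧ dout G v = 1 ∧ (v, v) ∈ G.edges) :
    atype G v = 2 := by
  unfold atype; split_ifs <;> first | rfl | (exfalso; omega) | tauto

lemma atype_eq3 {G : NGraph} {v : ℕ} (h : 1 < din G v ∧ 1 < dout G v ∧ (v, v) ∉ G.edges) :
    atype G v = 3 := by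
  unfold atype; split_ifs <;> first | rfl | (exfalso; omega) | tauto

lemma atype_eq4 {G : NGraph} {v : ℕ} (h : 1 < din G v ∧ 1 < dout G v ∧ (v, v) ∈ G.edges) :
    atype G v = 4 := by
  unfold atype; split_ifs <;> first | rfl | (exfalso; omega) | tauto

/-- `atype` vanishes at vertices of small in/out degree. -/
lemma atype_zero_of_deg {G : NGraph} {v : ℕ} (h : din G v ≤ 1 ∧ dout G v ≤ 1 ∨
    din G v ≤ 1 ∧ (v, v) ∉ G.edges ∨ dout G v ≤ 1 ∧ (v, v) ∉ G.edges) :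
    atype G v = 0 := by
  by_cases hL : (v, v) ∈ G.edges <;> unfold atype <;> split_ifs <;>
    first | rfl | (exfalso; rcases h with h|h|h <;> simp_all <;> omega)


/-- The unified edge renaming map for a split at `v` with new vertices `vs`, `vt`
and loop carrier `l`. -/
def sM (v vs vt l : ℕ) (e : ℕ × ℕ) : ℕ × ℕ :=
  if e.1 = v ∧ e.2 = v then (l, l)
  else (if e.1 = v then vt else e.1, if e.2 = v then vs else e.2)

/-- Inverse of the renaming map. -/
def sMinv (v vs vt l : ℕ) (e : ℕ × ℕ) : ℕ × ℕ :=
  if e = (l, l) then (v, v)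
  else (if e.1 = vt then v else e.1, if e.2 = vs then v else e.2)

section Counting

variable {G : NGraph} {v vs vt l : ℕ}
  (hWF : WFg G) (hvs : vs ∉ G.verts) (hvt : vt ∉ G.verts) (hl : l ∉ G.verts) (hsvt : vs ≠ vt)

include hWF hvs hvt hl hsvt

lemma sM_leftInv : ∀ e ∈ G.edges, sMinv v vs vt l (sM v vs vt l e) = e := by
  rintro ⟨a, b⟩ he
  obtain ⟨ha, hb⟩ := hWF _ he
  simp only at ha hb
  have hav : a ≠ vs := fun h => hvs (h ▸ ha)
  have hat : a ≠ vt := fun h => hvt (h ▸ ha)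
  have hal : a ≠ l := fun h => hl (h ▸ ha)
  have hbv : b ≠ vs := fun h => hvs (h ▸ hb)
  have hbt : b ≠ vt := fun h => hvt (h ▸ hb)
  have hbl : b ≠ l := fun h => hl (h ▸ hb)
  by_cases h1 : a = v ∧ b = v
  · obtain ⟨h1a, h1b⟩ := h1
    subst h1a; subst h1b
    simp [sM, sMinv]
  · rw [sM, if_neg h1]
    have hne : ((if a = v then vt else a), (if b = v then vs else b)) ≠ (l, l) := by
      intro hEq
      obtain ⟨hx, hy⟩ := Prod.ext_iff.mp hEq
      simp only at hx hy
      by_cases ha2 : a = v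
      · have hb2 : b ≠ v := fun hh => h1 ⟨ha2, hh⟩
        rw [if_neg hb2] at hy
        exact hbl hy
      · rw [if_neg ha2] at hx
        exact hal hx
    rw [sMinv, if_neg hne]
    by_cases ha2 : a = v <;> by_cases hb2 : b = v <;>
      simp [ha2, hb2, hav, hat, hbv, Ne.symm hsvt] <;> tauto

lemma sM_injOn : Set.InjOn (sM v vs vt l) ↑G.edges := by
  intro e he e' he' h
  rw [← sM_leftInv hWF hvs hvt hl hsvt e he, ← sM_leftInv hWF hvs hvt hl hsvt e' he', h]

/-- Counting images: if the predicate transfers pointwise, the count is preserved. -/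
lemma count_image {p q : ℕ × ℕ → Prop} [DecidablePred p] [DecidablePred q]
    (hq : ∀ e ∈ G.edges, p (sM v vs vt l e) ↔ q e) :
    ((G.edges.image (sM v vs vt l)).filter p).card = (G.edges.filter q).card := by
  rw [Finset.filter_image]
  rw [Finset.card_image_of_injOn
    ((sM_injOn hWF hvs hvt hl hsvt).mono (Finset.coe_subset.mpr (Finset.filter_subset _ _)))]
  congr 1
  exact Finset.filter_congr (by simpa using hq)

lemma count_empty {p : ℕ × ℕ → Prop} [DecidablePred p]
    (hp : ∀ e ∈ G.edges, ¬ p (sM v vs vt l e)) :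
    ((G.edges.image (sM v vs vt l)).filter p).card = 0 := by
  rw [Finset.card_eq_zero, Finset.filter_eq_empty_iff]
  intro x hx
  obtain ⟨e, he, rfl⟩ := Finset.mem_image.mp hx
  exact hp e he

omit hsvt in
/-- Generic transfer of loop membership through the renaming. -/
lemma loop_mem {x : ℕ} (hxs : x ≠ vs ∨ x ≠ vt) :
    (x, x) ∈ G.edges.image (sM v vs vt l) ↔
      (x = l ∧ (v, v) ∈ G.edges) ∨ ((x, x) ∈ G.edges ∧ x ≠ v) := by
  constructor
  · intro h
    obtain ⟨⟨a, b⟩, he, hf⟩ := Finset.mem_image.mp h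
    obtain ⟨ha, hb⟩ := hWF _ he
    simp only at ha hb
    have hav : a ≠ vs := fun h => hvs (h ▸ ha)
    have hat : a ≠ vt := fun h => hvt (h ▸ ha)
    have hbv : b ≠ vs := fun h => hvs (h ▸ hb)
    have hbt : b ≠ vt := fun h => hvt (h ▸ hb)
    unfold sM at hf
    by_cases h1 : a = v ∧ b = v
    · rw [if_pos h1] at hf
      simp only [Prod.mk.injEq] at hf
      obtain ⟨rfl, -⟩ := hf
      have he' := he
      rw [h1.1, h1.2] at he'
      exact Or.inl ⟨rfl, he'⟩
    · rw [if_neg h1] at hf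
      simp only [Prod.mk.injEq] at hf
      obtain ⟨h1', h2'⟩ := hf
      by_cases ha2 : a = v
      · rw [if_pos ha2] at h1'
        by_cases hb2 : b = v
        · exact absurd ⟨ha2, hb2⟩ h1
        · rw [if_neg hb2] at h2'
          exact absurd (h1'.trans h2'.symm) (Ne.symm hbt)
      · rw [if_neg ha2] at h1'
        by_cases hb2 : b = v
        · rw [if_pos hb2] at h2'
          exact absurd (h1'.trans h2'.symm) hav
        · rw [if_neg hb2] at h2'
          subst h1'
          exact Or.inr ⟨h2' ▸ he, ha2⟩
  · rintro (⟨rfl, hv⟩ | ⟨he, hx⟩)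
    · exact Finset.mem_image.mpr ⟨(v, v), hv, by unfold sM; simp⟩
    · refine Finset.mem_image.mpr ⟨(x, x), he, ?_⟩
      unfold sM
      rw [if_neg (by simp [hx])]
      simp [hx]

omit hsvt in
lemma loop_old {u : ℕ} (hu : u ∈ G.verts) (huv : u ≠ v) :
    (u, u) ∈ G.edges.image (sM v vs vt l) ↔ (u, u) ∈ G.edges := by
  have hul : u ≠ l := fun h => hl (h ▸ hu)
  have hus : u ≠ vs := fun h => hvs (h ▸ hu)
  rw [loop_mem hWF hvs hvt hl (Or.inl hus)]
  constructor
  · rintro (⟨h, -⟩ | ⟨h, -⟩)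
    · exact absurd h hul
    · exact h
  · intro h; exact Or.inr ⟨h, huv⟩

omit hsvt in
lemma loop_new {x : ℕ} (hx : x ∉ G.verts) (hxs : x ≠ vs ∨ x ≠ vt) :
    (x, x) ∈ G.edges.image (sM v vs vt l) ↔ x = l ∧ (v, v) ∈ G.edges := by
  rw [loop_mem hWF hvs hvt hl hxs]
  constructor
  · rintro (h | ⟨h, -⟩)
    · exact h
    · exact absurd (hWF _ h).1 hx
  · exact Or.inl

/-- Non-loop in-degree contribution of the renamed edges at an old vertex. -/
lemma count_in_old {u : ℕ} (hu : u ∈ G.verts) (huv : u ≠ v) :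
    ((G.edges.image (sM v vs vt l)).filter (fun e => e.2 = u ∧ e.1 ≠ u)).card = din G u := by
  rw [din]
  apply count_image hWF hvs hvt hl hsvt
  rintro ⟨a, b⟩ he
  obtain ⟨ha, hb⟩ := hWF _ he
  simp only at ha hb
  have hul : u ≠ l := fun h => hl (h ▸ hu)
  have hus : u ≠ vs := fun h => hvs (h ▸ hu)
  have hut : u ≠ vt := fun h => hvt (h ▸ hu)
  unfold sM
  by_cases h1 : a = v ∧ b = v
  · rw [if_pos h1]
    simp only
    constructor
    · rintro ⟨h, -⟩; exact absurd h.symm hul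
    · rintro ⟨h, -⟩; exact absurd (h1.2 ▸ h) (Ne.symm huv)
  · rw [if_neg h1]
    simp only
    by_cases ha2 : a = v <;> by_cases hb2 : b = v <;>
      simp [ha2, hb2, Ne.symm hus, Ne.symm hut, Ne.symm huv] <;> tauto

lemma count_out_old {u : ℕ} (hu : u ∈ G.verts) (huv : u ≠ v) :
    ((G.edges.image (sM v vs vt l)).filter (fun e => e.1 = u ∧ e.2 ≠ u)).card = dout G u := by
  rw [dout]
  apply count_image hWF hvs hvt hl hsvt
  rintro ⟨a, b⟩ he
  obtain ⟨ha, hb⟩ := hWF _ he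
  simp only at ha hb
  have hul : u ≠ l := fun h => hl (h ▸ hu)
  have hus : u ≠ vs := fun h => hvs (h ▸ hu)
  have hut : u ≠ vt := fun h => hvt (h ▸ hu)
  unfold sM
  by_cases h1 : a = v ∧ b = v
  · rw [if_pos h1]
    simp only
    constructor
    · rintro ⟨h, -⟩; exact absurd h.symm hul
    · rintro ⟨h, -⟩; exact absurd (h1.1 ▸ h) (Ne.symm huv)
  · rw [if_neg h1]
    simp only
    by_cases ha2 : a = v <;> by_cases hb2 : b = v <;>
      simp [ha2, hb2, Ne.symm hus, Ne.symm hut, Ne.symm huv] <;> tauto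

lemma count_in_vs :
    ((G.edges.image (sM v vs vt l)).filter (fun e => e.2 = vs ∧ e.1 ≠ vs)).card = din G v := by
  rw [din]
  apply count_image hWF hvs hvt hl hsvt
  rintro ⟨a, b⟩ he
  obtain ⟨ha, hb⟩ := hWF _ he
  simp only at ha hb
  have hav : a ≠ vs := fun h => hvs (h ▸ ha)
  have hbv : b ≠ vs := fun h => hvs (h ▸ hb)
  unfold sM
  by_cases h1 : a = v ∧ b = v
  · rw [if_pos h1]
    simp only
    constructor
    · rintro ⟨h, hne⟩; exact absurd h hne
    · rintro ⟨-, hne⟩; exact absurd h1.1 hne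
  · rw [if_neg h1]
    simp only
    by_cases ha2 : a = v <;> by_cases hb2 : b = v <;>
      simp [ha2, hb2, hbv, hav, Ne.symm hsvt] <;> tauto

lemma count_out_vt :
    ((G.edges.image (sM v vs vt l)).filter (fun e => e.1 = vt ∧ e.2 ≠ vt)).card = dout G v := by
  rw [dout]
  apply count_image hWF hvs hvt hl hsvt
  rintro ⟨a, b⟩ he
  obtain ⟨ha, hb⟩ := hWF _ he
  simp only at ha hb
  have hat : a ≠ vt := fun h => hvt (h ▸ ha)
  have hbt : b ≠ vt := fun h => hvt (h ▸ hb)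
  unfold sM
  by_cases h1 : a = v ∧ b = v
  · rw [if_pos h1]
    simp only
    constructor
    · rintro ⟨h, hne⟩; exact absurd h hne
    · rintro ⟨-, hne⟩; exact absurd h1.2 hne
  · rw [if_neg h1]
    simp only
    by_cases ha2 : a = v <;> by_cases hb2 : b = v <;>
      simp [ha2, hb2, hat, hbt, hsvt] <;> tauto

lemma count_out_vs :
    ((G.edges.image (sM v vs vt l)).filter (fun e => e.1 = vs ∧ e.2 ≠ vs)).card = 0 := by
  apply count_empty hWF hvs hvt hl hsvt
  rintro ⟨a, b⟩ he
  obtain ⟨ha, hb⟩ := hWF _ he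
  simp only at ha hb
  have hav : a ≠ vs := fun h => hvs (h ▸ ha)
  unfold sM
  by_cases h1 : a = v ∧ b = v
  · rw [if_pos h1]; simp
  · rw [if_neg h1]
    simp only
    by_cases ha2 : a = v <;> simp [ha2, hav, Ne.symm hsvt]

lemma count_in_vt :
    ((G.edges.image (sM v vs vt l)).filter (fun e => e.2 = vt ∧ e.1 ≠ vt)).card = 0 := by
  apply count_empty hWF hvs hvt hl hsvt
  rintro ⟨a, b⟩ he
  obtain ⟨ha, hb⟩ := hWF _ he
  simp only at ha hb
  have hbt : b ≠ vt := fun h => hvt (h ▸ hb)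
  unfold sM
  by_cases h1 : a = v ∧ b = v
  · rw [if_pos h1]; simp
  · rw [if_neg h1]
    simp only
    by_cases hb2 : b = v <;> simp [hb2, hbt, hsvt]

lemma count_in_new {x : ℕ} (hx : x ∉ G.verts) (hxs : x ≠ vs) :
    ((G.edges.image (sM v vs vt l)).filter (fun e => e.2 = x ∧ e.1 ≠ x)).card = 0 := by
  apply count_empty hWF hvs hvt hl hsvt
  rintro ⟨a, b⟩ he
  obtain ⟨ha, hb⟩ := hWF _ he
  simp only at ha hb
  have hbx : b ≠ x := fun h => hx (h ▸ hb)
  unfold sM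
  by_cases h1 : a = v ∧ b = v
  · rw [if_pos h1]; simp
  · rw [if_neg h1]
    simp only
    by_cases hb2 : b = v <;> simp [hb2, Ne.symm hxs, hbx]

lemma count_out_new {x : ℕ} (hx : x ∉ G.verts) (hxt : x ≠ vt) :
    ((G.edges.image (sM v vs vt l)).filter (fun e => e.1 = x ∧ e.2 ≠ x)).card = 0 := by
  apply count_empty hWF hvs hvt hl hsvt
  rintro ⟨a, b⟩ he
  obtain ⟨ha, hb⟩ := hWF _ he
  simp only at ha hb
  have hax : a ≠ x := fun h => hx (h ▸ ha)
  unfold sM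
  by_cases h1 : a = v ∧ b = v
  · rw [if_pos h1]; simp
  · rw [if_neg h1]
    simp only
    by_cases ha2 : a = v <;> simp [ha2, Ne.symm hxt, hax]

end Counting


/-! ### The canonical stretching -/

/-- Vertices replacing `u` in the canonical stretching. -/
def bV (G : NGraph) (u : ℕ) : Finset ℕ :=
  if atype G u = 0 then {3 * u}
  else if atype G u = 4 then {3 * u, 3 * u + 1, 3 * u + 2}
  else {3 * u, 3 * u + 2}

/-- Connector edges replacing `u` in the canonical stretching. -/
def cE (G : NGraph) (u : ℕ) : Finset (ℕ × ℕ) :=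
  if atype G u = 0 then ∅
  else if atype G u = 4 then {(3 * u, 3 * u + 1), (3 * u + 1, 3 * u + 2)}
  else {(3 * u, 3 * u + 2)}

/-- Loop carrier of `u` in the canonical stretching. -/
def lV (G : NGraph) (u : ℕ) : ℕ :=
  if atype G u = 2 then 3 * u + 2 else if atype G u = 4 then 3 * u + 1 else 3 * u

/-- Out-vertex of `u` in the canonical stretching. -/
def oV (G : NGraph) (u : ℕ) : ℕ := if atype G u = 0 then 3 * u else 3 * u + 2

/-- Image of an edge in the canonical stretching. -/
def gE (G : NGraph) (e : ℕ × ℕ) : ℕ × ℕ :=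
  if e.1 = e.2 then (lV G e.1, lV G e.1) else (oV G e.1, 3 * e.2)

/-- The canonical stretching of a graph. -/
def stretch (G : NGraph) : NGraph :=
  ⟨G.verts.biUnion (bV G), G.edges.image (gE G) ∪ G.verts.biUnion (cE G)⟩

lemma mem_bV {G : NGraph} {u x : ℕ} :
    x ∈ bV G u ↔ x = 3 * u ∨ (atype G u ≠ 0 ∧ x = 3 * u + 2) ∨ (atype G u = 4 ∧ x = 3 * u + 1) := by
  unfold bV
  split_ifs with h1 h2
  · simp [h1]
  · simp [h1, h2]; tauto
  · simp [h1, h2]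

lemma mem_cE {G : NGraph} {u : ℕ} {e : ℕ × ℕ} :
    e ∈ cE G u ↔ (atype G u ≠ 0 ∧ atype G u ≠ 4 ∧ e = (3 * u, 3 * u + 2)) ∨
      (atype G u = 4 ∧ (e = (3 * u, 3 * u + 1) ∨ e = (3 * u + 1, 3 * u + 2))) := by
  unfold cE
  split_ifs with h1 h2
  · simp [h1]
  · simp [h1, h2]
  · simp [h1, h2]

lemma lV_mem_bV {G : NGraph} {u : ℕ} : lV G u ∈ bV G u := by
  unfold lV bV
  split_ifs <;> simp_all

lemma oV_mem_bV {G : NGraph} {u : ℕ} : oV G u ∈ bV G u := by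
  unfold oV bV
  split_ifs <;> simp_all

lemma inV_mem_bV {G : NGraph} {u : ℕ} : 3 * u ∈ bV G u := by
  unfold bV
  split_ifs <;> simp

lemma mem_stretch_verts {G : NGraph} {x : ℕ} :
    x ∈ (stretch G).verts ↔ ∃ u ∈ G.verts, x ∈ bV G u := by
  simp [stretch]

lemma WFg_stretch {G : NGraph} (hWF : WFg G) : WFg (stretch G) := by
  intro e he
  simp only [stretch, Finset.mem_union, Finset.mem_image, Finset.mem_biUnion] at he
  rcases he with ⟨ε, hε, rfl⟩ | ⟨u, hu, hc⟩
  · obtain ⟨ha, hb⟩ := hWF _ hε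
    unfold gE
    split_ifs with h1
    · exact ⟨mem_stretch_verts.mpr ⟨ε.1, ha, lV_mem_bV⟩, mem_stretch_verts.mpr ⟨ε.1, ha, lV_mem_bV⟩⟩
    · exact ⟨mem_stretch_verts.mpr ⟨ε.1, ha, oV_mem_bV⟩, mem_stretch_verts.mpr ⟨ε.2, hb, inV_mem_bV⟩⟩
  · rcases mem_cE.mp hc with ⟨h0, h4, rfl⟩ | ⟨h4, rfl | rfl⟩
    · exact ⟨mem_stretch_verts.mpr ⟨u, hu, mem_bV.mpr (Or.inl rfl)⟩,
        mem_stretch_verts.mpr ⟨u, hu, mem_bV.mpr (Or.inr (Or.inl ⟨h0, rfl⟩))⟩⟩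
    · exact ⟨mem_stretch_verts.mpr ⟨u, hu, mem_bV.mpr (Or.inl rfl)⟩,
        mem_stretch_verts.mpr ⟨u, hu, mem_bV.mpr (Or.inr (Or.inr ⟨h4, rfl⟩))⟩⟩
    · exact ⟨mem_stretch_verts.mpr ⟨u, hu, mem_bV.mpr (Or.inr (Or.inr ⟨h4, rfl⟩))⟩,
        mem_stretch_verts.mpr ⟨u, hu, mem_bV.mpr (Or.inr (Or.inl ⟨by simp [h4], rfl⟩))⟩⟩

/-! ### Isomorphism basics -/

lemma niso_symm {G H : NGraph} (h : NIso G H) : NIso H G := by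
  obtain ⟨φ, hbij, hiff⟩ := h
  have hinv := hbij.invOn_invFunOn
  refine ⟨Function.invFunOn φ ↑G.verts, hbij.symm hinv.symm, ?_⟩
  intro a ha b hb
  have ha' : Function.invFunOn φ ↑G.verts a ∈ G.verts := (hbij.symm hinv.symm).mapsTo ha
  have hb' : Function.invFunOn φ ↑G.verts b ∈ G.verts := (hbij.symm hinv.symm).mapsTo hb
  rw [(hiff _ ha' _ hb'), hinv.2 ha, hinv.2 hb]

lemma niso_trans {G H K : NGraph} (h1 : NIso G H) (h2 : NIso H K) : NIso G K := by
  obtain ⟨φ, hbij1, hiff1⟩ := h1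
  obtain ⟨ψ, hbij2, hiff2⟩ := h2
  refine ⟨ψ ∘ φ, hbij2.comp hbij1, ?_⟩
  intro a ha b hb
  rw [hiff1 _ ha _ hb, hiff2 _ (hbij1.mapsTo ha) _ (hbij1.mapsTo hb)]
  rfl

/-- A graph in which no transformation applies is isomorphic to its own stretching. -/
lemma niso_stretch_self {H : NGraph} (hWF : WFg H) (h0 : ∀ v ∈ H.verts, atype H v = 0) :
    NIso H (stretch H) := by
  refine ⟨fun x => 3 * x, ⟨?_, ?_, ?_⟩, ?_⟩
  · intro x hx
    exact mem_stretch_verts.mpr ⟨x, hx, inV_mem_bV⟩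
  · intro x _ y _ h
    simp only at h
    omega
  · intro y hy
    obtain ⟨u, hu, hb⟩ := mem_stretch_verts.mp hy
    rcases mem_bV.mp hb with rfl | ⟨hne, -⟩ | ⟨h4, -⟩
    · exact ⟨u, hu, rfl⟩
    · exact absurd (h0 u hu) hne
    · rw [h0 u hu] at h4; omega
  · intro a ha b hb
    show (a, b) ∈ H.edges ↔ (3 * a, 3 * b) ∈ (stretch H).edges
    constructor
    · intro h
      have hab : gE H (a, b) = (3 * a, 3 * b) := by
        unfold gE lV oV
        by_cases hab : a = b
        · subst hab; simp [h0 a ha]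
        · simp [hab, h0 a ha]
      exact Finset.mem_union_left _ (Finset.mem_image.mpr ⟨(a, b), h, hab⟩)
    · intro h
      simp only [stretch, Finset.mem_union, Finset.mem_image, Finset.mem_biUnion] at h
      rcases h with ⟨⟨c, d⟩, he, hf⟩ | ⟨u, hu, hc⟩
      · obtain ⟨hc1, hd1⟩ := hWF _ he
        simp only at hc1 hd1
        have hlc : lV H c = 3 * c := by unfold lV; rw [h0 c hc1]; simp
        have hoc : oV H c = 3 * c := by unfold oV; rw [h0 c hc1]; simp
        unfold gE at hf
        split_ifs at hf with h1
        · simp only at h1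
          subst h1
          rw [hlc] at hf
          simp only [Prod.mk.injEq] at hf
          obtain ⟨h2, h3⟩ := hf
          have hca : c = a := by omega
          have hcb : c = b := by omega
          subst hca
          rw [← hcb]
          exact he
        · rw [hoc] at hf
          simp only [Prod.mk.injEq] at hf
          obtain ⟨h2, h3⟩ := hf
          have hca : c = a := by omega
          have hdb : d = b := by omega
          subst hca; subst hdb
          exact he
      · rcases mem_cE.mp hc with ⟨h1, -, -⟩ | ⟨h1, -⟩
        · exact absurd (h0 u hu) h1
        · rw [h0 u hu] at h1; omega


/-! ### The master analysis of a single split -/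

/-- The vertex relabelling of the stretching induced by a split at `v`. -/
def phi (v vs vt w x : ℕ) : ℕ :=
  if x = 3 * v then 3 * vs else if x = 3 * v + 1 then 3 * w else if x = 3 * v + 2 then 3 * vt else x

lemma phi_fix {v vs vt w x u : ℕ} (huv : u ≠ v)
    (hx : x = 3 * u ∨ x = 3 * u + 1 ∨ x = 3 * u + 2) : phi v vs vt w x = x := by
  rcases hx with rfl | rfl | rfl <;> unfold phi <;> split_ifs <;> omega

lemma phi_a {v vs vt w : ℕ} : phi v vs vt w (3 * v) = 3 * vs := by
  unfold phi; split_ifs <;> omega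

lemma phi_b {v vs vt w : ℕ} : phi v vs vt w (3 * v + 1) = 3 * w := by
  unfold phi; split_ifs <;> omega

lemma phi_c {v vs vt w : ℕ} : phi v vs vt w (3 * v + 2) = 3 * vt := by
  unfold phi; split_ifs <;> omega

lemma phi_id {v vs vt w x : ℕ} (h : ¬(x = 3 * v ∨ x = 3 * v + 1 ∨ x = 3 * v + 2)) :
    phi v vs vt w x = x := by
  push_neg at h
  unfold phi
  rw [if_neg h.1, if_neg h.2.1, if_neg h.2.2]

section Master

variable {G G' : NGraph} {v vs vt w l : ℕ}
  (hWF : WFg G) (hv : v ∈ G.verts) (hk0 : atype G v ≠ 0)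
  (hvs : vs ∉ G.verts) (hvt : vt ∉ G.verts) (hw : w ∉ G.verts) (hl : l ∉ G.verts)
  (hsvt : vs ≠ vt) (hwvs : w ≠ vs) (hwvt : w ≠ vt)
  (hl1 : atype G v = 1 → l = vs) (hl2 : atype G v = 2 → l = vt)
  (hl3 : atype G v = 3 → l = vs) (hl4 : atype G v = 4 → l = w)
  (hV' : G'.verts = (if atype G v = 4 then {vs, w, vt} else {vs, vt}) ∪ G.verts.erase v)
  (hE' : G'.edges =
    (if atype G v = 4 then ({(vs, w), (w, vt)} : Finset (ℕ × ℕ)) else {(vs, vt)}) ∪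
      G.edges.image (sM v vs vt l))

include hWF hv hk0 hvs hvt hw hl hsvt hwvs hwvt hl1 hl2 hl3 hl4 hV' hE'

lemma m_disj :
    Disjoint (if atype G v = 4 then ({(vs, w), (w, vt)} : Finset (ℕ × ℕ)) else {(vs, vt)})
      (G.edges.image (sM v vs vt l)) := by
  rw [Finset.disjoint_left]
  intro e heC heI
  obtain ⟨⟨a, b⟩, he, hf⟩ := Finset.mem_image.mp heI
  obtain ⟨ha, hb⟩ := hWF _ he
  simp only at ha hb
  have hbs : b ≠ vs := fun h => hvs (h ▸ hb)
  have hbt : b ≠ vt := fun h => hvt (h ▸ hb)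
  have hbw : b ≠ w := fun h => hw (h ▸ hb)
  have h2 : e.2 = vt ∨ e.2 = w := by
    split_ifs at heC with h4
    · rcases Finset.mem_insert.mp heC with rfl | h'
      · exact Or.inr rfl
      · rw [Finset.mem_singleton.mp h']; exact Or.inl rfl
    · rw [Finset.mem_singleton.mp heC]; exact Or.inl rfl
  unfold sM at hf
  by_cases h1 : a = v ∧ b = v
  · rw [if_pos h1] at hf
    obtain rfl : e = (l, l) := hf.symm
    split_ifs at heC with h4
    · simp only [Finset.mem_insert, Finset.mem_singleton, Prod.mk.injEq] at heC
      rcases heC with ⟨he1, he2⟩ | ⟨he1, he2⟩ <;> omega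
    · simp only [Finset.mem_singleton, Prod.mk.injEq] at heC
      obtain ⟨he1, he2⟩ := heC
      omega
  · rw [if_neg h1] at hf
    have h2' : e.2 = if b = v then vs else b := by rw [← hf]
    rcases h2 with hvt2 | hw2
    · by_cases hb2 : b = v
      · rw [hvt2, if_pos hb2] at h2'; exact hsvt h2'.symm
      · rw [hvt2, if_neg hb2] at h2'; exact hbt h2'.symm
    · by_cases hb2 : b = v
      · rw [hw2, if_pos hb2] at h2'; exact hwvs h2'
      · rw [hw2, if_neg hb2] at h2'; exact hbw h2'.symm

lemma m_card {p : ℕ × ℕ → Prop} [DecidablePred p] :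
    (G'.edges.filter p).card =
      ((if atype G v = 4 then ({(vs, w), (w, vt)} : Finset (ℕ × ℕ)) else {(vs, vt)}).filter p).card
        + ((G.edges.image (sM v vs vt l)).filter p).card := by
  rw [hE', Finset.filter_union,
    Finset.card_union_of_disjoint
      (Finset.disjoint_filter_filter (m_disj hWF hv hk0 hvs hvt hw hl hsvt hwvs hwvt hl1 hl2 hl3 hl4 hV' hE'))]

lemma m_loop {x : ℕ} :
    (x, x) ∈ G'.edges ↔ (x, x) ∈ G.edges.image (sM v vs vt l) := by
  rw [hE', Finset.mem_union]
  constructor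
  · rintro (h | h)
    · exfalso
      split_ifs at h with h4
      · simp only [Finset.mem_insert, Finset.mem_singleton, Prod.mk.injEq] at h
        rcases h with ⟨he1, he2⟩ | ⟨he1, he2⟩ <;> omega
      · simp only [Finset.mem_singleton, Prod.mk.injEq] at h
        obtain ⟨he1, he2⟩ := h
        omega
    · exact h
  · exact Or.inr


lemma m_din_old {u : ℕ} (hu : u ∈ G.verts) (huv : u ≠ v) : din G' u = din G u := by
  have hut : u ≠ vt := fun h => hvt (h ▸ hu)
  have huw : u ≠ w := fun h => hw (h ▸ hu)
  have hC : ((if atype G v = 4 then ({(vs, w), (w, vt)} : Finset (ℕ × ℕ)) else {(vs, vt)}).filter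
      (fun e => e.2 = u ∧ e.1 ≠ u)).card = 0 := by
    rw [Finset.card_eq_zero, Finset.filter_eq_empty_iff]
    intro e he
    split_ifs at he with h4
    · simp only [Finset.mem_insert, Finset.mem_singleton] at he
      rcases he with rfl | rfl <;> simp [Ne.symm huw, Ne.symm hut]
    · rw [Finset.mem_singleton.mp he]; simp [Ne.symm hut]
  rw [din, m_card hWF hv hk0 hvs hvt hw hl hsvt hwvs hwvt hl1 hl2 hl3 hl4 hV' hE', hC, count_in_old hWF hvs hvt hl hsvt hu huv, zero_add]

lemma m_dout_old {u : ℕ} (hu : u ∈ G.verts) (huv : u ≠ v) : dout G' u = dout G u := by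
  have hus : u ≠ vs := fun h => hvs (h ▸ hu)
  have huw : u ≠ w := fun h => hw (h ▸ hu)
  have hC : ((if atype G v = 4 then ({(vs, w), (w, vt)} : Finset (ℕ × ℕ)) else {(vs, vt)}).filter
      (fun e => e.1 = u ∧ e.2 ≠ u)).card = 0 := by
    rw [Finset.card_eq_zero, Finset.filter_eq_empty_iff]
    intro e he
    split_ifs at he with h4
    · simp only [Finset.mem_insert, Finset.mem_singleton] at he
      rcases he with rfl | rfl <;> simp [Ne.symm huw, Ne.symm hus]
    · rw [Finset.mem_singleton.mp he]; simp [Ne.symm hus]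
  rw [dout, m_card hWF hv hk0 hvs hvt hw hl hsvt hwvs hwvt hl1 hl2 hl3 hl4 hV' hE', hC, count_out_old hWF hvs hvt hl hsvt hu huv, zero_add]

lemma m_loop_old {u : ℕ} (hu : u ∈ G.verts) (huv : u ≠ v) :
    ((u, u) ∈ G'.edges ↔ (u, u) ∈ G.edges) := by
  rw [m_loop hWF hv hk0 hvs hvt hw hl hsvt hwvs hwvt hl1 hl2 hl3 hl4 hV' hE']
  exact loop_old hWF hvs hvt hl hu huv

lemma m_atype_old {u : ℕ} (hu : u ∈ G.verts) (huv : u ≠ v) : atype G' u = atype G u :=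
  atype_congr (m_din_old hWF hv hk0 hvs hvt hw hl hsvt hwvs hwvt hl1 hl2 hl3 hl4 hV' hE' hu huv) (m_dout_old hWF hv hk0 hvs hvt hw hl hsvt hwvs hwvt hl1 hl2 hl3 hl4 hV' hE' hu huv) (m_loop_old hWF hv hk0 hvs hvt hw hl hsvt hwvs hwvt hl1 hl2 hl3 hl4 hV' hE' hu huv)

lemma m_din_vs : din G' vs = din G v := by
  have hC : ((if atype G v = 4 then ({(vs, w), (w, vt)} : Finset (ℕ × ℕ)) else {(vs, vt)}).filter
      (fun e => e.2 = vs ∧ e.1 ≠ vs)).card = 0 := by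
    rw [Finset.card_eq_zero, Finset.filter_eq_empty_iff]
    intro e he
    split_ifs at he with h4
    · simp only [Finset.mem_insert, Finset.mem_singleton] at he
      rcases he with rfl | rfl <;> simp [hwvs, Ne.symm hsvt]
    · rw [Finset.mem_singleton.mp he]; simp [Ne.symm hsvt]
  rw [din, m_card hWF hv hk0 hvs hvt hw hl hsvt hwvs hwvt hl1 hl2 hl3 hl4 hV' hE', hC, count_in_vs hWF hvs hvt hl hsvt, zero_add]

lemma m_dout_vs : dout G' vs = 1 := by
  have hC : ((if atype G v = 4 then ({(vs, w), (w, vt)} : Finset (ℕ × ℕ)) else {(vs, vt)}).filter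
      (fun e => e.1 = vs ∧ e.2 ≠ vs)).card = 1 := by
    split_ifs with h4
    · rw [Finset.filter_insert, if_pos (show (vs, w).1 = vs ∧ (vs, w).2 ≠ vs from ⟨rfl, hwvs⟩),
        Finset.filter_singleton, if_neg (show ¬((w, vt).1 = vs ∧ (w, vt).2 ≠ vs) from
          fun hh => hwvs hh.1)]
      simp
    · rw [Finset.filter_singleton, if_pos (show (vs, vt).1 = vs ∧ (vs, vt).2 ≠ vs from
        ⟨rfl, Ne.symm hsvt⟩)]
      simp
  rw [dout, m_card hWF hv hk0 hvs hvt hw hl hsvt hwvs hwvt hl1 hl2 hl3 hl4 hV' hE', hC, count_out_vs hWF hvs hvt hl hsvt]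

lemma m_loop_vs : ((vs, vs) ∈ G'.edges ↔ atype G v = 1) := by
  rw [m_loop hWF hv hk0 hvs hvt hw hl hsvt hwvs hwvt hl1 hl2 hl3 hl4 hV' hE', loop_new hWF hvs hvt hl hvs (Or.inr hsvt)]
  constructor
  · rintro ⟨hvl, hloop⟩
    have h5 : atype G v < 5 := atype_lt5
    have hcase : atype G v = 1 ∨ atype G v = 2 ∨ atype G v = 3 ∨ atype G v = 4 := by omega
    rcases hcase with h | h | h | h
    · exact h
    · exact absurd (hvl.trans (hl2 h)) hsvt
    · exact absurd hloop (atype3 h).2.2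
    · exact absurd (hvl.trans (hl4 h)) (Ne.symm hwvs)
  · intro h1
    exact ⟨(hl1 h1).symm, (atype1 h1).2.2⟩

lemma m_atype_vs : atype G' vs = 0 := by
  by_cases h1 : atype G v = 1
  · refine atype_zero_of_deg (Or.inl ⟨?_, ?_⟩)
    · rw [m_din_vs hWF hv hk0 hvs hvt hw hl hsvt hwvs hwvt hl1 hl2 hl3 hl4 hV' hE', (atype1 h1).1]
    · rw [m_dout_vs hWF hv hk0 hvs hvt hw hl hsvt hwvs hwvt hl1 hl2 hl3 hl4 hV' hE']
  · refine atype_zero_of_deg (Or.inr (Or.inr ⟨?_, ?_⟩))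
    · rw [m_dout_vs hWF hv hk0 hvs hvt hw hl hsvt hwvs hwvt hl1 hl2 hl3 hl4 hV' hE']
    · rw [m_loop_vs hWF hv hk0 hvs hvt hw hl hsvt hwvs hwvt hl1 hl2 hl3 hl4 hV' hE']; exact h1

lemma m_din_vt : din G' vt = 1 := by
  have hC : ((if atype G v = 4 then ({(vs, w), (w, vt)} : Finset (ℕ × ℕ)) else {(vs, vt)}).filter
      (fun e => e.2 = vt ∧ e.1 ≠ vt)).card = 1 := by
    split_ifs with h4
    · rw [Finset.filter_insert, if_neg (show ¬((vs, w).2 = vt ∧ (vs, w).1 ≠ vt) from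
        fun hh => hwvt hh.1), Finset.filter_singleton,
        if_pos (show (w, vt).2 = vt ∧ (w, vt).1 ≠ vt from ⟨rfl, hwvt⟩)]
      simp
    · rw [Finset.filter_singleton, if_pos (show (vs, vt).2 = vt ∧ (vs, vt).1 ≠ vt from
        ⟨rfl, hsvt⟩)]
      simp
  rw [din, m_card hWF hv hk0 hvs hvt hw hl hsvt hwvs hwvt hl1 hl2 hl3 hl4 hV' hE', hC, count_in_vt hWF hvs hvt hl hsvt]

lemma m_dout_vt : dout G' vt = dout G v := by
  have hC : ((if atype G v = 4 then ({(vs, w), (w, vt)} : Finset (ℕ × ℕ)) else {(vs, vt)}).filter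
      (fun e => e.1 = vt ∧ e.2 ≠ vt)).card = 0 := by
    rw [Finset.card_eq_zero, Finset.filter_eq_empty_iff]
    intro e he
    split_ifs at he with h4
    · simp only [Finset.mem_insert, Finset.mem_singleton] at he
      rcases he with rfl | rfl <;> simp [hsvt, hwvt]
    · rw [Finset.mem_singleton.mp he]; simp [hsvt]
  rw [dout, m_card hWF hv hk0 hvs hvt hw hl hsvt hwvs hwvt hl1 hl2 hl3 hl4 hV' hE', hC, count_out_vt hWF hvs hvt hl hsvt, zero_add]

lemma m_loop_vt : ((vt, vt) ∈ G'.edges ↔ atype G v = 2) := by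
  rw [m_loop hWF hv hk0 hvs hvt hw hl hsvt hwvs hwvt hl1 hl2 hl3 hl4 hV' hE', loop_new hWF hvs hvt hl hvt (Or.inl (Ne.symm hsvt))]
  constructor
  · rintro ⟨hvl, hloop⟩
    have h5 : atype G v < 5 := atype_lt5
    have hcase : atype G v = 1 ∨ atype G v = 2 ∨ atype G v = 3 ∨ atype G v = 4 := by omega
    rcases hcase with h | h | h | h
    · exact absurd (hvl.trans (hl1 h)) (Ne.symm hsvt)
    · exact h
    · exact absurd hloop (atype3 h).2.2
    · exact absurd (hvl.trans (hl4 h)) (Ne.symm hwvt)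
  · intro h2
    exact ⟨(hl2 h2).symm, (atype2 h2).2.2⟩

lemma m_atype_vt : atype G' vt = 0 := by
  by_cases h2 : atype G v = 2
  · refine atype_zero_of_deg (Or.inl ⟨?_, ?_⟩)
    · rw [m_din_vt hWF hv hk0 hvs hvt hw hl hsvt hwvs hwvt hl1 hl2 hl3 hl4 hV' hE']
    · rw [m_dout_vt hWF hv hk0 hvs hvt hw hl hsvt hwvs hwvt hl1 hl2 hl3 hl4 hV' hE', (atype2 h2).2.1]
  · refine atype_zero_of_deg (Or.inr (Or.inl ⟨?_, ?_⟩))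
    · rw [m_din_vt hWF hv hk0 hvs hvt hw hl hsvt hwvs hwvt hl1 hl2 hl3 hl4 hV' hE']
    · rw [m_loop_vt hWF hv hk0 hvs hvt hw hl hsvt hwvs hwvt hl1 hl2 hl3 hl4 hV' hE']; exact h2

lemma m_din_w (h4 : atype G v = 4) : din G' w = 1 := by
  have hC : ((if atype G v = 4 then ({(vs, w), (w, vt)} : Finset (ℕ × ℕ)) else {(vs, vt)}).filter
      (fun e => e.2 = w ∧ e.1 ≠ w)).card = 1 := by
    rw [if_pos h4, Finset.filter_insert,
      if_pos (show (vs, w).2 = w ∧ (vs, w).1 ≠ w from ⟨rfl, Ne.symm hwvs⟩),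
      Finset.filter_singleton, if_neg (show ¬((w, vt).2 = w ∧ (w, vt).1 ≠ w) from
        fun hh => hwvt hh.1.symm)]
    simp
  rw [din, m_card hWF hv hk0 hvs hvt hw hl hsvt hwvs hwvt hl1 hl2 hl3 hl4 hV' hE', hC, count_in_new hWF hvs hvt hl hsvt hw hwvs]

lemma m_dout_w (h4 : atype G v = 4) : dout G' w = 1 := by
  have hC : ((if atype G v = 4 then ({(vs, w), (w, vt)} : Finset (ℕ × ℕ)) else {(vs, vt)}).filter
      (fun e => e.1 = w ∧ e.2 ≠ w)).card = 1 := by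
    rw [if_pos h4, Finset.filter_insert,
      if_neg (show ¬((vs, w).1 = w ∧ (vs, w).2 ≠ w) from fun hh => hwvs hh.1.symm),
      Finset.filter_singleton, if_pos (show (w, vt).1 = w ∧ (w, vt).2 ≠ w from
        ⟨rfl, Ne.symm hwvt⟩)]
    simp
  rw [dout, m_card hWF hv hk0 hvs hvt hw hl hsvt hwvs hwvt hl1 hl2 hl3 hl4 hV' hE', hC, count_out_new hWF hvs hvt hl hsvt hw hwvt]

lemma m_atype_w (h4 : atype G v = 4) : atype G' w = 0 :=
  atype_zero_of_deg (Or.inl ⟨le_of_eq (m_din_w hWF hv hk0 hvs hvt hw hl hsvt hwvs hwvt hl1 hl2 hl3 hl4 hV' hE' h4), le_of_eq (m_dout_w hWF hv hk0 hvs hvt hw hl hsvt hwvs hwvt hl1 hl2 hl3 hl4 hV' hE' h4)⟩)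

lemma m_vs_mem : vs ∈ G'.verts := by
  rw [hV', Finset.mem_union]
  left
  split_ifs <;> simp

lemma m_vt_mem : vt ∈ G'.verts := by
  rw [hV', Finset.mem_union]
  left
  split_ifs <;> simp

lemma m_w_mem (h4 : atype G v = 4) : w ∈ G'.verts := by
  rw [hV', Finset.mem_union]
  left
  rw [if_pos h4]
  simp

lemma m_old_mem {u : ℕ} (hu : u ∈ G.verts) (huv : u ≠ v) : u ∈ G'.verts := by
  rw [hV', Finset.mem_union]
  exact Or.inr (Finset.mem_erase.mpr ⟨huv, hu⟩)

lemma m_WF' : WFg G' := by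
  intro e he
  rw [hE', Finset.mem_union] at he
  rcases he with he | he
  · split_ifs at he with h4
    · simp only [Finset.mem_insert, Finset.mem_singleton] at he
      rcases he with rfl | rfl
      · exact ⟨m_vs_mem hWF hv hk0 hvs hvt hw hl hsvt hwvs hwvt hl1 hl2 hl3 hl4 hV' hE', m_w_mem hWF hv hk0 hvs hvt hw hl hsvt hwvs hwvt hl1 hl2 hl3 hl4 hV' hE' h4⟩
      · exact ⟨m_w_mem hWF hv hk0 hvs hvt hw hl hsvt hwvs hwvt hl1 hl2 hl3 hl4 hV' hE' h4, m_vt_mem hWF hv hk0 hvs hvt hw hl hsvt hwvs hwvt hl1 hl2 hl3 hl4 hV' hE'⟩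
    · rw [Finset.mem_singleton.mp he]
      exact ⟨m_vs_mem hWF hv hk0 hvs hvt hw hl hsvt hwvs hwvt hl1 hl2 hl3 hl4 hV' hE', m_vt_mem hWF hv hk0 hvs hvt hw hl hsvt hwvs hwvt hl1 hl2 hl3 hl4 hV' hE'⟩
  · obtain ⟨⟨a, b⟩, hab, rfl⟩ := Finset.mem_image.mp he
    obtain ⟨ha, hb⟩ := hWF _ hab
    simp only at ha hb
    have hlm : l ∈ G'.verts := by
      have h5 : atype G v < 5 := atype_lt5
      have hcase : atype G v = 1 ∨ atype G v = 2 ∨ atype G v = 3 ∨ atype G v = 4 := by omega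
      rcases hcase with h | h | h | h
      · rw [hl1 h]; exact m_vs_mem hWF hv hk0 hvs hvt hw hl hsvt hwvs hwvt hl1 hl2 hl3 hl4 hV' hE'
      · rw [hl2 h]; exact m_vt_mem hWF hv hk0 hvs hvt hw hl hsvt hwvs hwvt hl1 hl2 hl3 hl4 hV' hE'
      · rw [hl3 h]; exact m_vs_mem hWF hv hk0 hvs hvt hw hl hsvt hwvs hwvt hl1 hl2 hl3 hl4 hV' hE'
      · rw [hl4 h]; exact m_w_mem hWF hv hk0 hvs hvt hw hl hsvt hwvs hwvt hl1 hl2 hl3 hl4 hV' hE' h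
    unfold sM
    by_cases h1 : a = v ∧ b = v
    · rw [if_pos h1]
      exact ⟨hlm, hlm⟩
    · rw [if_neg h1]
      constructor
      · by_cases ha2 : a = v
        · rw [if_pos ha2]; exact m_vt_mem hWF hv hk0 hvs hvt hw hl hsvt hwvs hwvt hl1 hl2 hl3 hl4 hV' hE'
        · rw [if_neg ha2]; exact m_old_mem hWF hv hk0 hvs hvt hw hl hsvt hwvs hwvt hl1 hl2 hl3 hl4 hV' hE' ha ha2
      · by_cases hb2 : b = v
        · rw [if_pos hb2]; exact m_vs_mem hWF hv hk0 hvs hvt hw hl hsvt hwvs hwvt hl1 hl2 hl3 hl4 hV' hE'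
        · rw [if_neg hb2]; exact m_old_mem hWF hv hk0 hvs hvt hw hl hsvt hwvs hwvt hl1 hl2 hl3 hl4 hV' hE' hb hb2


lemma m_measure : G'.verts.filter (fun u => atype G' u ≠ 0) =
    (G.verts.filter (fun u => atype G u ≠ 0)).erase v := by
  ext x
  simp only [Finset.mem_filter, Finset.mem_erase]
  constructor
  · rintro ⟨hx, hax⟩
    rw [hV', Finset.mem_union] at hx
    rcases hx with hx | hx
    · exfalso
      apply hax
      split_ifs at hx with h4
      · simp only [Finset.mem_insert, Finset.mem_singleton] at hx
        rcases hx with rfl | rfl | rfl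
        · exact m_atype_vs hWF hv hk0 hvs hvt hw hl hsvt hwvs hwvt hl1 hl2 hl3 hl4 hV' hE'
        · exact m_atype_w hWF hv hk0 hvs hvt hw hl hsvt hwvs hwvt hl1 hl2 hl3 hl4 hV' hE' h4
        · exact m_atype_vt hWF hv hk0 hvs hvt hw hl hsvt hwvs hwvt hl1 hl2 hl3 hl4 hV' hE'
      · simp only [Finset.mem_insert, Finset.mem_singleton] at hx
        rcases hx with rfl | rfl
        · exact m_atype_vs hWF hv hk0 hvs hvt hw hl hsvt hwvs hwvt hl1 hl2 hl3 hl4 hV' hE'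
        · exact m_atype_vt hWF hv hk0 hvs hvt hw hl hsvt hwvs hwvt hl1 hl2 hl3 hl4 hV' hE'
    · obtain ⟨hxv, hxm⟩ := Finset.mem_erase.mp hx
      exact ⟨hxv, hxm, fun h0 => hax ((m_atype_old hWF hv hk0 hvs hvt hw hl hsvt hwvs hwvt hl1 hl2 hl3 hl4 hV' hE' hxm hxv).trans h0)⟩
  · rintro ⟨hxv, hxm, hax⟩
    exact ⟨m_old_mem hWF hv hk0 hvs hvt hw hl hsvt hwvs hwvt hl1 hl2 hl3 hl4 hV' hE' hxm hxv, fun h0 => hax ((m_atype_old hWF hv hk0 hvs hvt hw hl hsvt hwvs hwvt hl1 hl2 hl3 hl4 hV' hE' hxm hxv).symm.trans h0)⟩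

lemma m_atype_l0 : atype G' l = 0 := by
  have h5 : atype G v < 5 := atype_lt5
  have hcase : atype G v = 1 ∨ atype G v = 2 ∨ atype G v = 3 ∨ atype G v = 4 := by omega
  rcases hcase with h | h | h | h
  · rw [hl1 h]; exact m_atype_vs hWF hv hk0 hvs hvt hw hl hsvt hwvs hwvt hl1 hl2 hl3 hl4 hV' hE'
  · rw [hl2 h]; exact m_atype_vt hWF hv hk0 hvs hvt hw hl hsvt hwvs hwvt hl1 hl2 hl3 hl4 hV' hE'
  · rw [hl3 h]; exact m_atype_vs hWF hv hk0 hvs hvt hw hl hsvt hwvs hwvt hl1 hl2 hl3 hl4 hV' hE'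
  · rw [hl4 h]; exact m_atype_w hWF hv hk0 hvs hvt hw hl hsvt hwvs hwvt hl1 hl2 hl3 hl4 hV' hE' h

lemma m_gE_comm : ∀ e ∈ G.edges,
    gE G' (sM v vs vt l e) = (phi v vs vt w (gE G e).1, phi v vs vt w (gE G e).2) := by
  have h5 : atype G v < 5 := atype_lt5
  have hcase : atype G v = 1 ∨ atype G v = 2 ∨ atype G v = 3 ∨ atype G v = 4 := by omega
  rintro ⟨a, b⟩ he
  obtain ⟨ha, hb⟩ := hWF _ he
  simp only at ha hb
  unfold sM
  by_cases h1 : a = v ∧ b = v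
  · rw [if_pos h1]
    have hll : gE G' (l, l) = (3 * l, 3 * l) := by
      unfold gE
      rw [if_pos rfl]
      unfold lV
      rw [m_atype_l0 hWF hv hk0 hvs hvt hw hl hsvt hwvs hwvt hl1 hl2 hl3 hl4 hV' hE']
      simp
    rw [hll]
    obtain ⟨h1a, h1b⟩ := h1
    have hg : gE G (a, b) = (lV G v, lV G v) := by
      show (if a = b then (lV G a, lV G a) else (oV G a, 3 * b)) = (lV G v, lV G v)
      rw [h1a, h1b, if_pos rfl]
    rw [hg]
    have hphi : phi v vs vt w (lV G v) = 3 * l := by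
      unfold lV
      rcases hcase with h | h | h | h
      · rw [if_neg (by omega), if_neg (by omega), phi_a, hl1 h]
      · rw [if_pos h, phi_c, hl2 h]
      · rw [if_neg (by omega), if_neg (by omega), phi_a, hl3 h]
      · rw [if_neg (by omega), if_pos h, phi_b, hl4 h]
    rw [hphi]
  · rw [if_neg h1]
    by_cases hab : a = b
    · subst hab
      have hav : a ≠ v := fun h => h1 ⟨h, h⟩
      rw [if_neg hav, if_neg hav]
      show gE G' (a, a) = _
      have hg : gE G (a, a) = (lV G a, lV G a) := by unfold gE; rw [if_pos rfl]
      rw [hg]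
      unfold gE
      rw [if_pos rfl]
      have h2 : lV G' a = lV G a := by unfold lV; rw [m_atype_old hWF hv hk0 hvs hvt hw hl hsvt hwvs hwvt hl1 hl2 hl3 hl4 hV' hE' ha hav]
      rw [h2]
      have h3 : phi v vs vt w (lV G a) = lV G a :=
        phi_fix hav (by unfold lV; split_ifs <;> simp)
      rw [h3]
    · have hg : gE G (a, b) = (oV G a, 3 * b) := by unfold gE; rw [if_neg hab]
      rw [hg]
      by_cases ha2 : a = v
      · have hb2 : b ≠ v := fun h => h1 ⟨ha2, h⟩
        rw [if_pos ha2, if_neg hb2]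
        have hbt : b ≠ vt := fun h => hvt (h ▸ hb)
        show gE G' (vt, b) = _
        unfold gE
        rw [if_neg (show (vt, b).1 ≠ (vt, b).2 from fun h => hbt h.symm)]
        have h2 : oV G' vt = 3 * vt := by unfold oV; rw [m_atype_vt hWF hv hk0 hvs hvt hw hl hsvt hwvs hwvt hl1 hl2 hl3 hl4 hV' hE']; simp
        rw [h2]
        have h3 : phi v vs vt w (oV G a) = 3 * vt := by
          rw [ha2]
          unfold oV
          rw [if_neg hk0, phi_c]
        have h4 : phi v vs vt w (3 * b) = 3 * b := phi_fix hb2 (Or.inl rfl)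
        rw [h3, h4]
      · rw [if_neg ha2]
        have h3 : phi v vs vt w (oV G a) = oV G a :=
          phi_fix ha2 (by unfold oV; split_ifs <;> simp)
        have hoa : oV G' a = oV G a := by unfold oV; rw [m_atype_old hWF hv hk0 hvs hvt hw hl hsvt hwvs hwvt hl1 hl2 hl3 hl4 hV' hE' ha ha2]
        by_cases hb2 : b = v
        · rw [if_pos hb2]
          show gE G' (a, vs) = _
          have has : a ≠ vs := fun h => hvs (h ▸ ha)
          unfold gE
          rw [if_neg (show (a, vs).1 ≠ (a, vs).2 from has)]
          rw [hoa, h3]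
          rw [hb2, phi_a]
        · rw [if_neg hb2]
          show gE G' (a, b) = _
          unfold gE
          rw [if_neg (show (a, b).1 ≠ (a, b).2 from hab)]
          rw [hoa, h3, phi_fix hb2 (Or.inl rfl)]

lemma m_edge_sub : ∀ e ∈ (stretch G).edges,
    (phi v vs vt w e.1, phi v vs vt w e.2) ∈ (stretch G').edges := by
  intro e he
  simp only [stretch, Finset.mem_union, Finset.mem_image, Finset.mem_biUnion] at he ⊢
  rcases he with ⟨ε, hε, rfl⟩ | ⟨u, hu, hc⟩
  · left
    exact ⟨sM v vs vt l ε, by rw [hE']; exact Finset.mem_union_right _ (Finset.mem_image_of_mem _ hε),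
      m_gE_comm hWF hv hk0 hvs hvt hw hl hsvt hwvs hwvt hl1 hl2 hl3 hl4 hV' hE' ε hε⟩
  · by_cases huv : u = v
    · subst huv
      left
      rcases mem_cE.mp hc with ⟨-, h4, rfl⟩ | ⟨h4, rfl | rfl⟩
      · refine ⟨(vs, vt), by rw [hE']; exact Finset.mem_union_left _ (by rw [if_neg h4]; simp), ?_⟩
        unfold gE
        rw [if_neg (show (vs, vt).1 ≠ (vs, vt).2 from hsvt)]
        have h2 : oV G' vs = 3 * vs := by unfold oV; rw [m_atype_vs hWF hv hk0 hvs hvt hw hl hsvt hwvs hwvt hl1 hl2 hl3 hl4 hV' hE']; simp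
        rw [h2]
        show _ = (phi u vs vt w (3 * u), phi u vs vt w (3 * u + 2))
        rw [phi_a, phi_c]
      · refine ⟨(vs, w), by rw [hE']; exact Finset.mem_union_left _ (by rw [if_pos h4]; simp), ?_⟩
        unfold gE
        rw [if_neg (show (vs, w).1 ≠ (vs, w).2 from Ne.symm hwvs)]
        have h2 : oV G' vs = 3 * vs := by unfold oV; rw [m_atype_vs hWF hv hk0 hvs hvt hw hl hsvt hwvs hwvt hl1 hl2 hl3 hl4 hV' hE']; simp
        rw [h2]
        show _ = (phi u vs vt w (3 * u), phi u vs vt w (3 * u + 1))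
        rw [phi_a, phi_b]
      · refine ⟨(w, vt), by rw [hE']; exact Finset.mem_union_left _ (by rw [if_pos h4]; simp), ?_⟩
        unfold gE
        rw [if_neg (show (w, vt).1 ≠ (w, vt).2 from hwvt)]
        have h2 : oV G' w = 3 * w := by unfold oV; rw [m_atype_w hWF hv hk0 hvs hvt hw hl hsvt hwvs hwvt hl1 hl2 hl3 hl4 hV' hE' h4]; simp
        rw [h2]
        show _ = (phi u vs vt w (3 * u + 1), phi u vs vt w (3 * u + 2))
        rw [phi_b, phi_c]
    · right
      refine ⟨u, m_old_mem hWF hv hk0 hvs hvt hw hl hsvt hwvs hwvt hl1 hl2 hl3 hl4 hV' hE' hu huv, ?_⟩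
      have hcE : cE G' u = cE G u := by unfold cE; rw [m_atype_old hWF hv hk0 hvs hvt hw hl hsvt hwvs hwvt hl1 hl2 hl3 hl4 hV' hE' hu huv]
      rw [hcE]
      rcases mem_cE.mp hc with ⟨h0, h4, rfl⟩ | ⟨h4, rfl | rfl⟩
      · rw [phi_fix huv (Or.inl rfl), phi_fix huv (Or.inr (Or.inr rfl))]
        exact hc
      · rw [phi_fix huv (Or.inl rfl), phi_fix huv (Or.inr (Or.inl rfl))]
        exact hc
      · rw [phi_fix huv (Or.inr (Or.inl rfl)), phi_fix huv (Or.inr (Or.inr rfl))]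
        exact hc

lemma m_edge_sup : ∀ e' ∈ (stretch G').edges,
    ∃ e ∈ (stretch G).edges, (phi v vs vt w e.1, phi v vs vt w e.2) = e' := by
  intro e' he'
  simp only [stretch, Finset.mem_union, Finset.mem_image, Finset.mem_biUnion] at he'
  rcases he' with ⟨ε', hε', rfl⟩ | ⟨u', hu', hc⟩
  · rw [hE', Finset.mem_union] at hε'
    rcases hε' with hC | hI
    · split_ifs at hC with h4
      · simp only [Finset.mem_insert, Finset.mem_singleton] at hC
        rcases hC with rfl | rfl
        · refine ⟨(3 * v, 3 * v + 1), ?_, ?_⟩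
          · exact Finset.mem_union_right _ (Finset.mem_biUnion.mpr ⟨v, hv,
              mem_cE.mpr (Or.inr ⟨h4, Or.inl rfl⟩)⟩)
          · show (phi v vs vt w (3 * v), phi v vs vt w (3 * v + 1)) = _
            rw [phi_a, phi_b]
            unfold gE
            rw [if_neg (show (vs, w).1 ≠ (vs, w).2 from Ne.symm hwvs)]
            have h2 : oV G' vs = 3 * vs := by unfold oV; rw [m_atype_vs hWF hv hk0 hvs hvt hw hl hsvt hwvs hwvt hl1 hl2 hl3 hl4 hV' hE']; simp
            rw [h2]
        · refine ⟨(3 * v + 1, 3 * v + 2), ?_, ?_⟩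
          · exact Finset.mem_union_right _ (Finset.mem_biUnion.mpr ⟨v, hv,
              mem_cE.mpr (Or.inr ⟨h4, Or.inr rfl⟩)⟩)
          · show (phi v vs vt w (3 * v + 1), phi v vs vt w (3 * v + 2)) = _
            rw [phi_b, phi_c]
            unfold gE
            rw [if_neg (show (w, vt).1 ≠ (w, vt).2 from hwvt)]
            have h2 : oV G' w = 3 * w := by unfold oV; rw [m_atype_w hWF hv hk0 hvs hvt hw hl hsvt hwvs hwvt hl1 hl2 hl3 hl4 hV' hE' h4]; simp
            rw [h2]
      · rw [Finset.mem_singleton.mp hC]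
        refine ⟨(3 * v, 3 * v + 2), ?_, ?_⟩
        · exact Finset.mem_union_right _ (Finset.mem_biUnion.mpr ⟨v, hv,
            mem_cE.mpr (Or.inl ⟨hk0, h4, rfl⟩)⟩)
        · show (phi v vs vt w (3 * v), phi v vs vt w (3 * v + 2)) = _
          rw [phi_a, phi_c]
          unfold gE
          rw [if_neg (show (vs, vt).1 ≠ (vs, vt).2 from hsvt)]
          have h2 : oV G' vs = 3 * vs := by unfold oV; rw [m_atype_vs hWF hv hk0 hvs hvt hw hl hsvt hwvs hwvt hl1 hl2 hl3 hl4 hV' hE']; simp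
          rw [h2]
    · obtain ⟨ε, hε, rfl⟩ := Finset.mem_image.mp hI
      exact ⟨gE G ε, Finset.mem_union_left _ (Finset.mem_image_of_mem _ hε),
        (m_gE_comm hWF hv hk0 hvs hvt hw hl hsvt hwvs hwvt hl1 hl2 hl3 hl4 hV' hE' ε hε).symm⟩
  · rw [hV', Finset.mem_union] at hu'
    rcases hu' with hN | hold
    · exfalso
      have h0 : atype G' u' = 0 := by
        split_ifs at hN with h4
        · simp only [Finset.mem_insert, Finset.mem_singleton] at hN
          rcases hN with rfl | rfl | rfl
          · exact m_atype_vs hWF hv hk0 hvs hvt hw hl hsvt hwvs hwvt hl1 hl2 hl3 hl4 hV' hE'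
          · exact m_atype_w hWF hv hk0 hvs hvt hw hl hsvt hwvs hwvt hl1 hl2 hl3 hl4 hV' hE' h4
          · exact m_atype_vt hWF hv hk0 hvs hvt hw hl hsvt hwvs hwvt hl1 hl2 hl3 hl4 hV' hE'
        · simp only [Finset.mem_insert, Finset.mem_singleton] at hN
          rcases hN with rfl | rfl
          · exact m_atype_vs hWF hv hk0 hvs hvt hw hl hsvt hwvs hwvt hl1 hl2 hl3 hl4 hV' hE'
          · exact m_atype_vt hWF hv hk0 hvs hvt hw hl hsvt hwvs hwvt hl1 hl2 hl3 hl4 hV' hE'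
      rcases mem_cE.mp hc with ⟨h1, -, -⟩ | ⟨h1, -⟩
      · exact h1 h0
      · rw [h0] at h1; omega
    · obtain ⟨hu'v, hu'm⟩ := Finset.mem_erase.mp hold
      have hcE : cE G' u' = cE G u' := by unfold cE; rw [m_atype_old hWF hv hk0 hvs hvt hw hl hsvt hwvs hwvt hl1 hl2 hl3 hl4 hV' hE' hu'm hu'v]
      rw [hcE] at hc
      refine ⟨e', Finset.mem_union_right _ (Finset.mem_biUnion.mpr ⟨u', hu'm, hc⟩), ?_⟩
      rcases mem_cE.mp hc with ⟨-, -, rfl⟩ | ⟨-, rfl | rfl⟩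
      · rw [phi_fix hu'v (Or.inl rfl), phi_fix hu'v (Or.inr (Or.inr rfl))]
      · rw [phi_fix hu'v (Or.inl rfl), phi_fix hu'v (Or.inr (Or.inl rfl))]
      · rw [phi_fix hu'v (Or.inr (Or.inl rfl)), phi_fix hu'v (Or.inr (Or.inr rfl))]


lemma m_phi_notim : ∀ z, z ∈ (stretch G).verts → ¬(z = 3 * v ∨ z = 3 * v + 1 ∨ z = 3 * v + 2) →
    phi v vs vt w z = z ∧ z ≠ 3 * vs ∧ z ≠ 3 * w ∧ z ≠ 3 * vt := by
  intro z hz hP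
  obtain ⟨u, hu, hbv⟩ := mem_stretch_verts.mp hz
  have hform : z = 3 * u ∨ z = 3 * u + 2 ∨ z = 3 * u + 1 := by
    rcases mem_bV.mp hbv with h | ⟨-, h⟩ | ⟨-, h⟩
    · exact Or.inl h
    · exact Or.inr (Or.inl h)
    · exact Or.inr (Or.inr h)
  refine ⟨phi_id hP, ?_, ?_, ?_⟩
  · rcases hform with rfl | rfl | rfl
    · intro h
      have huvs : u = vs := by omega
      exact hvs (huvs ▸ hu)
    · omega
    · omega
  · rcases hform with rfl | rfl | rfl
    · intro h
      have huw : u = w := by omega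
      exact hw (huw ▸ hu)
    · omega
    · omega
  · rcases hform with rfl | rfl | rfl
    · intro h
      have huvt : u = vt := by omega
      exact hvt (huvt ▸ hu)
    · omega
    · omega

lemma m_phi_inj : Set.InjOn (phi v vs vt w) ↑(stretch G).verts := by
  intro x hx y hy hxy
  simp only [Finset.mem_coe] at hx hy
  by_cases hPx : x = 3 * v ∨ x = 3 * v + 1 ∨ x = 3 * v + 2 <;>
    by_cases hPy : y = 3 * v ∨ y = 3 * v + 1 ∨ y = 3 * v + 2
  · rcases hPx with rfl | rfl | rfl <;> rcases hPy with rfl | rfl | rfl <;>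
      simp only [phi_a, phi_b, phi_c] at hxy <;> omega
  · obtain ⟨hid, h1, h2, h3⟩ := m_phi_notim hWF hv hk0 hvs hvt hw hl hsvt hwvs hwvt hl1 hl2 hl3 hl4 hV' hE' y hy hPy
    rw [hid] at hxy
    rcases hPx with rfl | rfl | rfl
    · rw [phi_a] at hxy; exact absurd hxy.symm h1
    · rw [phi_b] at hxy; exact absurd hxy.symm h2
    · rw [phi_c] at hxy; exact absurd hxy.symm h3
  · obtain ⟨hid, h1, h2, h3⟩ := m_phi_notim hWF hv hk0 hvs hvt hw hl hsvt hwvs hwvt hl1 hl2 hl3 hl4 hV' hE' x hx hPx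
    rw [hid] at hxy
    rcases hPy with rfl | rfl | rfl
    · rw [phi_a] at hxy; exact absurd hxy h1
    · rw [phi_b] at hxy; exact absurd hxy h2
    · rw [phi_c] at hxy; exact absurd hxy h3
  · obtain ⟨hidx, -, -, -⟩ := m_phi_notim hWF hv hk0 hvs hvt hw hl hsvt hwvs hwvt hl1 hl2 hl3 hl4 hV' hE' x hx hPx
    obtain ⟨hidy, -, -, -⟩ := m_phi_notim hWF hv hk0 hvs hvt hw hl hsvt hwvs hwvt hl1 hl2 hl3 hl4 hV' hE' y hy hPy
    rw [hidx, hidy] at hxy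
    exact hxy

lemma m_iso : NIso (stretch G) (stretch G') := by
  refine ⟨phi v vs vt w, ⟨?_, m_phi_inj hWF hv hk0 hvs hvt hw hl hsvt hwvs hwvt hl1 hl2 hl3 hl4 hV' hE', ?_⟩, ?_⟩
  · -- maps to
    intro x hx
    simp only [Finset.mem_coe] at hx ⊢
    obtain ⟨u, hu, hbv⟩ := mem_stretch_verts.mp hx
    by_cases huv : u = v
    · subst huv
      rcases mem_bV.mp hbv with rfl | ⟨-, rfl⟩ | ⟨h4, rfl⟩
      · rw [phi_a]
        exact mem_stretch_verts.mpr ⟨vs, m_vs_mem hWF hv hk0 hvs hvt hw hl hsvt hwvs hwvt hl1 hl2 hl3 hl4 hV' hE', inV_mem_bV⟩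
      · rw [phi_c]
        exact mem_stretch_verts.mpr ⟨vt, m_vt_mem hWF hv hk0 hvs hvt hw hl hsvt hwvs hwvt hl1 hl2 hl3 hl4 hV' hE', inV_mem_bV⟩
      · rw [phi_b]
        exact mem_stretch_verts.mpr ⟨w, m_w_mem hWF hv hk0 hvs hvt hw hl hsvt hwvs hwvt hl1 hl2 hl3 hl4 hV' hE' h4, inV_mem_bV⟩
    · have hform : x = 3 * u ∨ x = 3 * u + 1 ∨ x = 3 * u + 2 := by
        rcases mem_bV.mp hbv with h | ⟨-, h⟩ | ⟨-, h⟩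
        · exact Or.inl h
        · exact Or.inr (Or.inr h)
        · exact Or.inr (Or.inl h)
      rw [phi_fix huv hform]
      have hbV : bV G' u = bV G u := by unfold bV; rw [m_atype_old hWF hv hk0 hvs hvt hw hl hsvt hwvs hwvt hl1 hl2 hl3 hl4 hV' hE' hu huv]
      exact mem_stretch_verts.mpr ⟨u, m_old_mem hWF hv hk0 hvs hvt hw hl hsvt hwvs hwvt hl1 hl2 hl3 hl4 hV' hE' hu huv, hbV ▸ hbv⟩
  · -- surj on
    intro y hy
    simp only [Finset.mem_coe] at hy
    obtain ⟨u', hu', hbv⟩ := mem_stretch_verts.mp hy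
    rw [hV', Finset.mem_union] at hu'
    rcases hu' with hN | hold
    · have h0 : atype G' u' = 0 ∧ (u' = vs ∨ u' = vt ∨ (atype G v = 4 ∧ u' = w)) := by
        split_ifs at hN with h4
        · simp only [Finset.mem_insert, Finset.mem_singleton] at hN
          rcases hN with rfl | rfl | rfl
          · exact ⟨m_atype_vs hWF hv hk0 hvs hvt hw hl hsvt hwvs hwvt hl1 hl2 hl3 hl4 hV' hE', Or.inl rfl⟩
          · exact ⟨m_atype_w hWF hv hk0 hvs hvt hw hl hsvt hwvs hwvt hl1 hl2 hl3 hl4 hV' hE' h4, Or.inr (Or.inr ⟨h4, rfl⟩)⟩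
          · exact ⟨m_atype_vt hWF hv hk0 hvs hvt hw hl hsvt hwvs hwvt hl1 hl2 hl3 hl4 hV' hE', Or.inr (Or.inl rfl)⟩
        · simp only [Finset.mem_insert, Finset.mem_singleton] at hN
          rcases hN with rfl | rfl
          · exact ⟨m_atype_vs hWF hv hk0 hvs hvt hw hl hsvt hwvs hwvt hl1 hl2 hl3 hl4 hV' hE', Or.inl rfl⟩
          · exact ⟨m_atype_vt hWF hv hk0 hvs hvt hw hl hsvt hwvs hwvt hl1 hl2 hl3 hl4 hV' hE', Or.inr (Or.inl rfl)⟩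
      obtain ⟨h0, hcases⟩ := h0
      have hy3 : y = 3 * u' := by
        rcases mem_bV.mp hbv with h | ⟨hne, -⟩ | ⟨h4', -⟩
        · exact h
        · exact absurd h0 hne
        · rw [h0] at h4'; omega
      subst hy3
      rcases hcases with rfl | rfl | ⟨h4, rfl⟩
      · exact ⟨3 * v, Finset.mem_coe.mpr (mem_stretch_verts.mpr ⟨v, hv, inV_mem_bV⟩), phi_a⟩
      · exact ⟨3 * v + 2, Finset.mem_coe.mpr (mem_stretch_verts.mpr ⟨v, hv,
          mem_bV.mpr (Or.inr (Or.inl ⟨hk0, rfl⟩))⟩), phi_c⟩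
      · exact ⟨3 * v + 1, Finset.mem_coe.mpr (mem_stretch_verts.mpr ⟨v, hv,
          mem_bV.mpr (Or.inr (Or.inr ⟨h4, rfl⟩))⟩), phi_b⟩
    · obtain ⟨hu'v, hu'm⟩ := Finset.mem_erase.mp hold
      have hbV : bV G' u' = bV G u' := by unfold bV; rw [m_atype_old hWF hv hk0 hvs hvt hw hl hsvt hwvs hwvt hl1 hl2 hl3 hl4 hV' hE' hu'm hu'v]
      rw [hbV] at hbv
      have hform : y = 3 * u' ∨ y = 3 * u' + 1 ∨ y = 3 * u' + 2 := by
        rcases mem_bV.mp hbv with h | ⟨-, h⟩ | ⟨-, h⟩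
        · exact Or.inl h
        · exact Or.inr (Or.inr h)
        · exact Or.inr (Or.inl h)
      exact ⟨y, Finset.mem_coe.mpr (mem_stretch_verts.mpr ⟨u', hu'm, hbv⟩), phi_fix hu'v hform⟩
  · -- edge correspondence
    intro a ha b hb
    constructor
    · intro h
      exact m_edge_sub hWF hv hk0 hvs hvt hw hl hsvt hwvs hwvt hl1 hl2 hl3 hl4 hV' hE' (a, b) h
    · intro h
      obtain ⟨e, he, heq⟩ := m_edge_sup hWF hv hk0 hvs hvt hw hl hsvt hwvs hwvt hl1 hl2 hl3 hl4 hV' hE' (phi v vs vt w a, phi v vs vt w b) h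
      obtain ⟨he1, he2⟩ := WFg_stretch hWF _ he
      have h1 : e.1 = a := m_phi_inj hWF hv hk0 hvs hvt hw hl hsvt hwvs hwvt hl1 hl2 hl3 hl4 hV' hE' (Finset.mem_coe.mpr he1) (Finset.mem_coe.mpr ha)
        (congrArg Prod.fst heq)
      have h2 : e.2 = b := m_phi_inj hWF hv hk0 hvs hvt hw hl hsvt hwvs hwvt hl1 hl2 hl3 hl4 hV' hE' (Finset.mem_coe.mpr he2) (Finset.mem_coe.mpr hb)
        (congrArg Prod.snd heq)
      have : e = (a, b) := Prod.ext h1 h2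
      rwa [← this]


lemma m_all : WFg G' ∧ NIso (stretch G) (stretch G') ∧
    G'.verts.filter (fun u => atype G' u ≠ 0) =
      (G.verts.filter (fun u => atype G u ≠ 0)).erase v :=
  ⟨m_WF' hWF hv hk0 hvs hvt hw hl hsvt hwvs hwvt hl1 hl2 hl3 hl4 hV' hE', m_iso hWF hv hk0 hvs hvt hw hl hsvt hwvs hwvt hl1 hl2 hl3 hl4 hV' hE', m_measure hWF hv hk0 hvs hvt hw hl hsvt hwvs hwvt hl1 hl2 hl3 hl4 hV' hE'⟩

end Master


/-! ### Per-case wrappers -/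

lemma atype_zero_of_din0 {G : NGraph} {x : ℕ} (h : din G x = 0) : atype G x = 0 := by
  unfold atype
  split_ifs with c1 c2 c3 c4
  · exact absurd c1.1 (by omega)
  · exact absurd c2.1 (by omega)
  · exact absurd c3.1 (by omega)
  · exact absurd c4.1 (by omega)
  · rfl

lemma atype_zero_of_dout0 {G : NGraph} {x : ℕ} (h : dout G x = 0) : atype G x = 0 := by
  unfold atype
  split_ifs with c1 c2 c3 c4
  · exact absurd c1.2.1 (by omega)
  · exact absurd c2.2.1 (by omega)
  · exact absurd c3.2.1 (by omega)
  · exact absurd c4.2.1 (by omega)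
  · rfl


lemma union_insert₁ {α : Type} [DecidableEq α] (a : α) (s : Finset α) :
    ({a} : Finset α) ∪ s = insert a s := by
  ext x; simp

lemma union_insert₂ {α : Type} [DecidableEq α] (a b : α) (s : Finset α) :
    ({a, b} : Finset α) ∪ s = insert a (insert b s) := by
  ext x; simp [or_assoc]

lemma union_insert₃ {α : Type} [DecidableEq α] (a b c : α) (s : Finset α) :
    ({a, b, c} : Finset α) ∪ s = insert a (insert b (insert c s)) := by
  ext x; simp [or_assoc]

/-- The facts extracted from a split, uniform over the four cases. -/
def SplitFacts (G G' : NGraph) (v : ℕ) : Prop :=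
  WFg G' ∧ NIso (stretch G) (stretch G') ∧ atype G v ≠ 0 ∧
    G'.verts.filter (fun u => atype G' u ≠ 0) =
      (G.verts.filter (fun u => atype G u ≠ 0)).erase v

lemma split1_facts {G G' : NGraph} {v : ℕ} (hWF : WFg G) (hv : v ∈ G.verts)
    (h : Split1 G v G') : SplitFacts G G' v := by
  obtain ⟨hd1, hd2, hd3, vs, vt, hvs, hvt, hsvt, hverts, hedges⟩ := h
  have hk1 : atype G v = 1 := atype_eq1 ⟨hd1, hd2, hd3⟩
  obtain ⟨w, hwmem⟩ := Finset.exists_notMem (insert vs (insert vt G.verts))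
  simp only [Finset.mem_insert, not_or] at hwmem
  obtain ⟨hwvs, hwvt, hw⟩ := hwmem
  have hk0 : atype G v ≠ 0 := by rw [hk1]; norm_num
  have h44 : atype G v ≠ 4 := by rw [hk1]; norm_num
  have hV' : G'.verts = (if atype G v = 4 then {vs, w, vt} else {vs, vt}) ∪ G.verts.erase v := by
    rw [if_neg h44, union_insert₂]
    exact hverts
  have hE' : G'.edges = (if atype G v = 4 then ({(vs, w), (w, vt)} : Finset (ℕ × ℕ))
      else {(vs, vt)}) ∪ G.edges.image (sM v vs vt vs) := by
    rw [if_neg h44, union_insert₁]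
    exact hedges
  obtain ⟨a, b, c⟩ := m_all hWF hv hk0 hvs hvt hw hvs hsvt hwvs hwvt (fun _ => rfl)
    (by intro hh; rw [hk1] at hh; try omega) (fun _ => rfl)
    (by intro hh; rw [hk1] at hh; try omega) hV' hE'
  exact ⟨a, b, hk0, c⟩

lemma split2_facts {G G' : NGraph} {v : ℕ} (hWF : WFg G) (hv : v ∈ G.verts)
    (h : Split2 G v G') : SplitFacts G G' v := by
  obtain ⟨hd1, hd2, hd3, vs, vt, hvs, hvt, hsvt, hverts, hedges⟩ := h
  have hk2 : atype G v = 2 := atype_eq2 ⟨hd1, hd2, hd3⟩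
  obtain ⟨w, hwmem⟩ := Finset.exists_notMem (insert vs (insert vt G.verts))
  simp only [Finset.mem_insert, not_or] at hwmem
  obtain ⟨hwvs, hwvt, hw⟩ := hwmem
  have hk0 : atype G v ≠ 0 := by rw [hk2]; norm_num
  have h44 : atype G v ≠ 4 := by rw [hk2]; norm_num
  have hV' : G'.verts = (if atype G v = 4 then {vs, w, vt} else {vs, vt}) ∪ G.verts.erase v := by
    rw [if_neg h44, union_insert₂]
    exact hverts
  have hE' : G'.edges = (if atype G v = 4 then ({(vs, w), (w, vt)} : Finset (ℕ × ℕ))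
      else {(vs, vt)}) ∪ G.edges.image (sM v vs vt vt) := by
    rw [if_neg h44, union_insert₁]
    exact hedges
  obtain ⟨a, b, c⟩ := m_all hWF hv hk0 hvs hvt hw hvt hsvt hwvs hwvt
    (by intro hh; rw [hk2] at hh; try omega) (fun _ => rfl)
    (by intro hh; rw [hk2] at hh; try omega) (by intro hh; rw [hk2] at hh; try omega) hV' hE'
  exact ⟨a, b, hk0, c⟩

lemma split3_facts {G G' : NGraph} {v : ℕ} (hWF : WFg G) (hv : v ∈ G.verts)
    (h : Split3 G v G') : SplitFacts G G' v := by
  obtain ⟨hd1, hd2, hd3, vs, vt, hvs, hvt, hsvt, hverts, hedges⟩ := h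
  have hk3 : atype G v = 3 := atype_eq3 ⟨hd1, hd2, hd3⟩
  obtain ⟨w, hwmem⟩ := Finset.exists_notMem (insert vs (insert vt G.verts))
  simp only [Finset.mem_insert, not_or] at hwmem
  obtain ⟨hwvs, hwvt, hw⟩ := hwmem
  have hk0 : atype G v ≠ 0 := by rw [hk3]; norm_num
  have h44 : atype G v ≠ 4 := by rw [hk3]; norm_num
  have hV' : G'.verts = (if atype G v = 4 then {vs, w, vt} else {vs, vt}) ∪ G.verts.erase v := by
    rw [if_neg h44, union_insert₂]
    exact hverts
  have himg : G.edges.image (fun e =>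
      ((if e.1 = v then vt else e.1), (if e.2 = v then vs else e.2))) =
      G.edges.image (sM v vs vt vs) := by
    apply Finset.image_congr
    rintro ⟨a, b⟩ he
    unfold sM
    rw [if_neg (fun hh : (a, b).1 = v ∧ (a, b).2 = v => hd3 (show (v, v) ∈ G.edges by
      obtain ⟨h1', h2'⟩ := hh
      simp only at h1' h2'
      subst h1'; subst h2'
      exact he))]
  have hE' : G'.edges = (if atype G v = 4 then ({(vs, w), (w, vt)} : Finset (ℕ × ℕ))
      else {(vs, vt)}) ∪ G.edges.image (sM v vs vt vs) := by
    rw [if_neg h44, union_insert₁, ← himg]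
    exact hedges
  obtain ⟨a, b, c⟩ := m_all hWF hv hk0 hvs hvt hw hvs hsvt hwvs hwvt
    (by intro hh; rw [hk3] at hh; try omega) (by intro hh; rw [hk3] at hh; try omega)
    (fun _ => rfl) (by intro hh; rw [hk3] at hh; try omega) hV' hE'
  exact ⟨a, b, hk0, c⟩

lemma split4_facts {G G' : NGraph} {v : ℕ} (hWF : WFg G) (hv : v ∈ G.verts)
    (h : Split4 G v G') : SplitFacts G G' v := by
  obtain ⟨hd1, hd2, hd3, vs, w, vt, hvs, hw, hvt, hsw, hsvt, hwt, hverts, hedges⟩ := h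
  have hk4 : atype G v = 4 := atype_eq4 ⟨hd1, hd2, hd3⟩
  have hk0 : atype G v ≠ 0 := by rw [hk4]; norm_num
  have hV' : G'.verts = (if atype G v = 4 then {vs, w, vt} else {vs, vt}) ∪ G.verts.erase v := by
    rw [if_pos hk4, union_insert₃]
    exact hverts
  have hE' : G'.edges = (if atype G v = 4 then ({(vs, w), (w, vt)} : Finset (ℕ × ℕ))
      else {(vs, vt)}) ∪ G.edges.image (sM v vs vt w) := by
    rw [if_pos hk4, union_insert₂]
    exact hedges
  obtain ⟨a, b, c⟩ := m_all hWF hv hk0 hvs hvt hw hw hsvt (Ne.symm hsw) hwt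
    (by intro hh; rw [hk4] at hh; try omega) (by intro hh; rw [hk4] at hh; try omega)
    (by intro hh; rw [hk4] at hh; try omega) (fun _ => rfl) hV' hE'
  exact ⟨a, b, hk0, c⟩

/-! ### The invariant and assembly -/

/-- The invariant carried along reductions: the graph is well formed and every
applicable vertex is interior. -/
def Invt (s t : ℕ) (G : NGraph) : Prop :=
  WFg G ∧ ∀ u ∈ G.verts, atype G u ≠ 0 → u ≠ s ∧ u ≠ t

lemma step_all {s t : ℕ} {G G' : NGraph} (hInv : Invt s t G) (hstep : Step s t G G') :
    Invt s t G' ∧ NIso (stretch G) (stretch G') ∧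
      (G'.verts.filter (fun u => atype G' u ≠ 0)).card <
        (G.verts.filter (fun u => atype G u ≠ 0)).card := by
  obtain ⟨hWF, hInt⟩ := hInv
  obtain ⟨v, hv, hs, ht, hsplit⟩ := hstep
  have key : SplitFacts G G' v := by
    rcases hsplit with h | h | h | h
    · exact split1_facts hWF hv h
    · exact split2_facts hWF hv h
    · exact split3_facts hWF hv h
    · exact split4_facts hWF hv h
  obtain ⟨hWF', hiso, hk0, hfeq⟩ := key
  have hvmem : v ∈ G.verts.filter (fun u => atype G u ≠ 0) := Finset.mem_filter.mpr ⟨hv, hk0⟩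
  refine ⟨⟨hWF', ?_⟩, hiso, ?_⟩
  · intro u hu hau
    have hmem : u ∈ G'.verts.filter (fun u => atype G' u ≠ 0) := Finset.mem_filter.mpr ⟨hu, hau⟩
    rw [hfeq] at hmem
    obtain ⟨-, h2⟩ := Finset.mem_erase.mp hmem
    obtain ⟨hum, hau'⟩ := Finset.mem_filter.mp h2
    exact hInt u hum hau'
  · rw [hfeq, Finset.card_erase_of_mem hvmem]
    have hpos : 0 < (G.verts.filter (fun u => atype G u ≠ 0)).card :=
      Finset.card_pos.mpr ⟨v, hvmem⟩
    omega

lemma exists_step {s t : ℕ} {G : NGraph} {v : ℕ} (hInv : Invt s t G) (hv : v ∈ G.verts)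
    (hk0 : atype G v ≠ 0) : ∃ G', Step s t G G' := by
  obtain ⟨hs, ht⟩ := hInv.2 v hv hk0
  obtain ⟨vs, hvs⟩ := Finset.exists_notMem G.verts
  obtain ⟨vt, hvt'⟩ := Finset.exists_notMem (insert vs G.verts)
  obtain ⟨v', hv''⟩ := Finset.exists_notMem (insert vt (insert vs G.verts))
  simp only [Finset.mem_insert, not_or] at hvt' hv''
  obtain ⟨hts, hvt⟩ := hvt'
  obtain ⟨hv't, hv's, hv'm⟩ := hv''
  have h5 : atype G v < 5 := atype_lt5
  have hcase : atype G v = 1 ∨ atype G v = 2 ∨ atype G v = 3 ∨ atype G v = 4 := by omega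
  rcases hcase with h | h | h | h
  · obtain ⟨c1, c2, c3⟩ := atype1 h
    exact ⟨⟨insert vs (insert vt (G.verts.erase v)), insert (vs, vt) (G.edges.image (fun e =>
        if e.1 = v ∧ e.2 = v then (vs, vs)
        else (if e.1 = v then vt else e.1, if e.2 = v then vs else e.2)))⟩,
      v, hv, hs, ht, Or.inl ⟨c1, c2, c3, vs, vt, hvs, hvt, Ne.symm hts, rfl, rfl⟩⟩
  · obtain ⟨c1, c2, c3⟩ := atype2 h
    exact ⟨⟨insert vs (insert vt (G.verts.erase v)), insert (vs, vt) (G.edges.image (fun e =>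
        if e.1 = v ∧ e.2 = v then (vt, vt)
        else (if e.1 = v then vt else e.1, if e.2 = v then vs else e.2)))⟩,
      v, hv, hs, ht, Or.inr (Or.inl ⟨c1, c2, c3, vs, vt, hvs, hvt, Ne.symm hts, rfl, rfl⟩)⟩
  · obtain ⟨c1, c2, c3⟩ := atype3 h
    exact ⟨⟨insert vs (insert vt (G.verts.erase v)), insert (vs, vt) (G.edges.image (fun e =>
        (if e.1 = v then vt else e.1, if e.2 = v then vs else e.2)))⟩,
      v, hv, hs, ht, Or.inr (Or.inr (Or.inl ⟨c1, c2, c3, vs, vt, hvs, hvt, Ne.symm hts, rfl, rfl⟩))⟩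
  · obtain ⟨c1, c2, c3⟩ := atype4 h
    exact ⟨⟨insert vs (insert v' (insert vt (G.verts.erase v))),
        insert (vs, v') (insert (v', vt) (G.edges.image (fun e =>
        if e.1 = v ∧ e.2 = v then (v', v')
        else (if e.1 = v then vt else e.1, if e.2 = v then vs else e.2))))⟩,
      v, hv, hs, ht, Or.inr (Or.inr (Or.inr ⟨c1, c2, c3, vs, v', vt, hvs, hv'm, hvt,
        Ne.symm hv's, Ne.symm hts, hv't, rfl, rfl⟩))⟩

lemma to_normal {s t : ℕ} : ∀ (n : ℕ) (G : NGraph), Invt s t G →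
    (G.verts.filter (fun u => atype G u ≠ 0)).card ≤ n →
    ∃ H, Relation.ReflTransGen (Step s t) G H ∧ NormalForm s t H := by
  intro n
  induction n with
  | zero =>
    intro G hInv hcard
    refine ⟨G, Relation.ReflTransGen.refl, ?_⟩
    intro u hu _ _ happ
    have h0 : atype G u ≠ 0 := applicable_iff_atype.mp happ
    have : u ∈ G.verts.filter (fun u => atype G u ≠ 0) := Finset.mem_filter.mpr ⟨hu, h0⟩
    rw [Finset.card_eq_zero.mp (Nat.le_zero.mp hcard)] at this
    exact absurd this (Finset.notMem_empty u)
  | succ n ih =>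
    intro G hInv hcard
    by_cases hzero : (G.verts.filter (fun u => atype G u ≠ 0)).card = 0
    · refine ⟨G, Relation.ReflTransGen.refl, ?_⟩
      intro u hu _ _ happ
      have h0 : atype G u ≠ 0 := applicable_iff_atype.mp happ
      have : u ∈ G.verts.filter (fun u => atype G u ≠ 0) := Finset.mem_filter.mpr ⟨hu, h0⟩
      rw [Finset.card_eq_zero.mp hzero] at this
      exact absurd this (Finset.notMem_empty u)
    · obtain ⟨v, hvmem⟩ := Finset.card_pos.mp (Nat.pos_of_ne_zero hzero)
      obtain ⟨hv, hk0⟩ := Finset.mem_filter.mp hvmem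
      obtain ⟨G', hstep⟩ := exists_step hInv hv hk0
      obtain ⟨hInv', -, hlt⟩ := step_all hInv hstep
      obtain ⟨H, hrtg, hNF⟩ := ih G' hInv' (by omega)
      exact ⟨H, Relation.ReflTransGen.head hstep hrtg, hNF⟩

lemma normal_iso_stretch {s t : ℕ} {H : NGraph} (hNF : NormalForm s t H) :
    ∀ {G}, Relation.ReflTransGen (Step s t) G H → Invt s t G → NIso H (stretch G) := by
  intro G hrtg
  induction hrtg using Relation.ReflTransGen.head_induction_on with
  | refl =>
    intro hInv
    refine niso_stretch_self hInv.1 (fun u hu => ?_)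
    by_contra h0
    exact hNF u hu (hInv.2 u hu h0).1 (hInv.2 u hu h0).2 (applicable_iff_atype.mpr h0)
  | head hstep hrtg ih =>
    intro hInv
    obtain ⟨hInv', hiso, -⟩ := step_all hInv hstep
    exact niso_trans (ih hInv') (niso_symm hiso)

lemma invt_of_flow {G : NGraph} {s t : ℕ} (hFG : NIsFlowGraph G s t) : Invt s t G := by
  obtain ⟨hWF, hsm, htm, hsrc, htgt, -⟩ := hFG
  refine ⟨hWF, fun u hu hk0 => ⟨?_, ?_⟩⟩
  · intro hus
    apply hk0
    apply atype_zero_of_din0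
    rw [din, Finset.card_eq_zero, Finset.filter_eq_empty_iff]
    rintro ⟨a, b⟩ he ⟨hb, hab⟩
    simp only at hb hab
    exact ((hsrc u hu).mpr hus) a (hb ▸ hab) (hb ▸ he)
  · intro hut
    apply hk0
    apply atype_zero_of_dout0
    rw [dout, Finset.card_eq_zero, Finset.filter_eq_empty_iff]
    rintro ⟨a, b⟩ he ⟨ha, hab⟩
    simp only at ha hab
    exact ((htgt u hu).mpr hut) b (ha ▸ hab) (ha ▸ he)

end Stretching
/-- The stretching of a flow graph is well defined: the splitting transformations can be
carried out to completion, and the cumulative result is independent of the order of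
application (up to isomorphism); moreover the result is stable, i.e. no interior vertex
of a normal form satisfies the hypotheses of any of the four transformations. -/
theorem stmt13 (G : NGraph) (s t : ℕ) (hFG : NIsFlowGraph G s t) :
    (∃ H : NGraph, Relation.ReflTransGen (Step s t) G H ∧ NormalForm s t H) ∧
    (∀ H H' : NGraph, Relation.ReflTransGen (Step s t) G H →
      Relation.ReflTransGen (Step s t) G H' →
      NormalForm s t H → NormalForm s t H' → NIso H H') := by
  have hInv : Stretching.Invt s t G := Stretching.invt_of_flow hFG
  constructor
  · obtain ⟨H, hrtg, hNF⟩ := Stretching.to_normal _ G hInv le_rfl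
    exact ⟨H, hrtg, hNF⟩
  · intro H H' h1 h2 n1 n2
    exact Stretching.niso_trans (Stretching.normal_iso_stretch n1 h1 hInv)
      (Stretching.niso_symm (Stretching.normal_iso_stretch n2 h2 hInv))
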